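/- arXiv:2408.14675 — 3 statements merged into one kernel-verified Lean document; each statement's English description precedes it below -/
import Mathlib

section
/- Let M be a compact definable C^2 submanifold of ℝ^n of dimension d (definable in a d-minimal expansion of the real ordered field), and let C ⊆ M be a compact definable subset that is contained in a subset U of M which is a definable C^2 multi-valued graph with respect to some coordinate projection π : ℝ^n → ℝ^d. Then the set {f ∈ D^2(M) : every critical point of f lying in C is nondegenerate} is open in D^2(M) with respect to the definable C^2 topology. -/
open FirstOrder Filter Topology

namespace DMorse

/-- A subset of `ℝ^n` is definable with parameters from `ℝ` in the `L`-structure `ℝ`. -/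
def Def (L : FirstOrder.Language) [L.Structure ℝ] (n : ℕ) (s : Set (Fin n → ℝ)) : Prop :=
  Set.Definable (Set.univ : Set ℝ) L s

/-- The `L`-structure on `ℝ` expands the real ordered field: the graphs of addition and
multiplication and the order relation are definable. -/
def ExpandsRealOrderedField (L : FirstOrder.Language) [L.Structure ℝ] : Prop :=
  Def L 3 {v | v 0 + v 1 = v 2} ∧ Def L 3 {v | v 0 * v 1 = v 2} ∧ Def L 2 {v | v 0 < v 1}

/-- A discrete subset of `ℝ`: every point is isolated. -/
def DiscreteSubset (s : Set ℝ) : Prop :=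
  ∀ x ∈ s, ∃ ε > (0 : ℝ), ∀ y ∈ s, |y - x| < ε → y = x

/-- d-minimality: for every definable `A ⊆ ℝ^(m+1)` there is `N` such that each fiber either has
nonempty interior or is a union of at most `N` discrete sets. -/
def DMinimal (L : FirstOrder.Language) [L.Structure ℝ] : Prop :=
  ∀ (m : ℕ) (A : Set (Fin (m + 1) → ℝ)), Def L (m + 1) A →
    ∃ N : ℕ, ∀ x : Fin m → ℝ,
      (interior {y : ℝ | Fin.snoc x y ∈ A}).Nonempty ∨
      ∃ t : Fin N → Set ℝ, {y : ℝ | Fin.snoc x y ∈ A} = ⋃ i, t i ∧ ∀ i, DiscreteSubset (t i)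

/-- `f` is a `C^r` map on `S` (`C^0` meaning continuous; for `r ≥ 1` it locally extends to
ambient `C^r` maps, which for a `C^r` submanifold `S` is equivalent to being `C^r` in charts). -/
def CrOn {E F : Type*} [NormedAddCommGroup E] [NormedSpace ℝ E]
    [NormedAddCommGroup F] [NormedSpace ℝ F] (r : ℕ) (S : Set E) (f : E → F) : Prop :=
  ContinuousOn f S ∧
  (1 ≤ r → ∀ x ∈ S, ∃ U : Set E, IsOpen U ∧ x ∈ U ∧
    ∃ g : E → F, ContDiffOn ℝ r g U ∧ Set.EqOn g f (S ∩ U))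

/-- The graph of a real-valued function on `M ⊆ ℝ^n`, as a subset of `ℝ^(n+1)`. -/
def graphFun (n : ℕ) (M : Set (Fin n → ℝ)) (f : (Fin n → ℝ) → ℝ) : Set (Fin (n + 1) → ℝ) :=
  {v | (fun i : Fin n => v i.castSucc) ∈ M ∧ v (Fin.last n) = f fun i : Fin n => v i.castSucc}

/-- A function `M → ℝ` is definable if its graph is definable. -/
def DefFun (L : FirstOrder.Language) [L.Structure ℝ] (n : ℕ) (M : Set (Fin n → ℝ))
    (f : (Fin n → ℝ) → ℝ) : Prop :=
  Def L (n + 1) (graphFun n M f)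

/-- The graph of a map `S → ℝ^k`, `S ⊆ ℝ^m`, as a subset of `ℝ^(m+k)`. -/
def graphMap (m k : ℕ) (S : Set (Fin m → ℝ)) (f : (Fin m → ℝ) → Fin k → ℝ) :
    Set (Fin (m + k) → ℝ) :=
  {v | (fun i : Fin m => v (Fin.castAdd k i)) ∈ S ∧
       (fun j : Fin k => v (Fin.natAdd m j)) = f fun i : Fin m => v (Fin.castAdd k i)}

/-- A map `S → ℝ^k` is definable if its graph is definable. -/
def DefMap (L : FirstOrder.Language) [L.Structure ℝ] (m k : ℕ) (S : Set (Fin m → ℝ))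
    (f : (Fin m → ℝ) → Fin k → ℝ) : Prop :=
  Def L (m + k) (graphMap m k S f)

/-- `Z` is a `C^r` submanifold of `ℝ^n` of dimension `k`: every point of `Z` has an ambient open
neighborhood `U` and a `C^r` diffeomorphism `φ : U → V` with `φ z = 0` flattening `Z` onto
`ℝ^k × {0}`. -/
def IsCrSubmanifold (r n k : ℕ) (Z : Set (Fin n → ℝ)) : Prop :=
  ∀ z ∈ Z, ∃ (U V : Set (Fin n → ℝ)) (φ ψ : (Fin n → ℝ) → Fin n → ℝ),
    IsOpen U ∧ z ∈ U ∧ IsOpen V ∧ ContDiffOn ℝ r φ U ∧ ContDiffOn ℝ r ψ V ∧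
    Set.MapsTo φ U V ∧ Set.MapsTo ψ V U ∧
    (∀ x ∈ U, ψ (φ x) = x) ∧ (∀ y ∈ V, φ (ψ y) = y) ∧
    φ z = 0 ∧ Z ∩ U = U ∩ φ ⁻¹' {y : Fin n → ℝ | ∀ i : Fin n, k ≤ (i : ℕ) → y i = 0}

/-- A definable `C^r` submanifold of `ℝ^n` of dimension `k`. -/
def IsDefCrSubmanifold (L : FirstOrder.Language) [L.Structure ℝ] (r n k : ℕ)
    (Z : Set (Fin n → ℝ)) : Prop :=
  Def L n Z ∧ IsCrSubmanifold r n k Z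

/-- Velocity vectors at `x` of differentiable curves passing through `x` inside `M`. -/
def curveDerivs (n : ℕ) (M : Set (Fin n → ℝ)) (x : Fin n → ℝ) : Set (Fin n → ℝ) :=
  {v | ∃ γ : ℝ → Fin n → ℝ, γ 0 = x ∧ (∀ᶠ t in 𝓝 (0 : ℝ), γ t ∈ M) ∧ HasDerivAt γ v 0}

/-- The tangent space of `M` at `x` (the span of velocity vectors of curves in `M` through `x`;
for a `C^1` submanifold this is the usual tangent space). -/
def TangentAt (n : ℕ) (M : Set (Fin n → ℝ)) (x : Fin n → ℝ) : Submodule ℝ (Fin n → ℝ) :=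
  Submodule.span ℝ (curveDerivs n M x)

/-- The euclidean inner product on `ℝ^n`. -/
def dot {n : ℕ} (u v : Fin n → ℝ) : ℝ := ∑ i, u i * v i

/-- `p` is the orthogonal projection of `v` onto the subspace `T`. -/
def IsOrthProjOnto {n : ℕ} (T : Submodule ℝ (Fin n → ℝ)) (v p : Fin n → ℝ) : Prop :=
  p ∈ T ∧ ∀ w ∈ T, dot (v - p) w = 0

/-- `c` is the derivative of `g` at `x` along the (tangent) vector `v`, computed along a curve
inside `M`. -/
def HasDerivAlong (n : ℕ) (M : Set (Fin n → ℝ)) (g : (Fin n → ℝ) → ℝ) (x v : Fin n → ℝ)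
    (c : ℝ) : Prop :=
  ∃ γ : ℝ → Fin n → ℝ, γ 0 = x ∧ (∀ᶠ t in 𝓝 (0 : ℝ), γ t ∈ M) ∧ HasDerivAt γ v 0 ∧
    HasDerivAt (g ∘ γ) c 0

/-- `D` is the function `D_j g` on `M`: at each `x ∈ M` its value is the derivative of `g` along
the orthogonal projection of the `j`-th standard basis vector onto the tangent space `T_x M`. -/
def IsDerivField (n : ℕ) (M : Set (Fin n → ℝ)) (g : (Fin n → ℝ) → ℝ) (j : Fin n)
    (D : (Fin n → ℝ) → ℝ) : Prop :=
  ∀ x ∈ M, ∀ p : Fin n → ℝ, IsOrthProjOnto (TangentAt n M x) (Pi.single j 1) p →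
    HasDerivAlong n M g x p (D x)

/-- `x` is a critical point of `f : M → ℝ`: the differential of `f` at `x` vanishes on `T_x M`,
i.e. the derivative of `f` along every differentiable curve in `M` through `x` vanishes. -/
def IsCriticalPt (n : ℕ) (M : Set (Fin n → ℝ)) (f : (Fin n → ℝ) → ℝ) (x : Fin n → ℝ) : Prop :=
  x ∈ M ∧ ∀ (γ : ℝ → Fin n → ℝ) (v : Fin n → ℝ), γ 0 = x → (∀ᶠ t in 𝓝 (0 : ℝ), γ t ∈ M) →
    HasDerivAt γ v 0 → HasDerivAt (f ∘ γ) 0 0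

/-- The `(i,j)` entry of the Hessian matrix of `g : ℝ^d → ℝ` at `t0`. -/
noncomputable def hessianEntry {d : ℕ} (g : (Fin d → ℝ) → ℝ) (t0 : Fin d → ℝ)
    (i j : Fin d) : ℝ :=
  iteratedFDeriv ℝ 2 g t0 ![Pi.single i 1, Pi.single j 1]

/-- `τ : W → ℝ^n` is a local `C^2` parametrization of `M` around `x`, with `τ t0 = x`. -/
def IsLocalParamAt (n d : ℕ) (M : Set (Fin n → ℝ)) (τ : (Fin d → ℝ) → Fin n → ℝ)
    (W : Set (Fin d → ℝ)) (t0 : Fin d → ℝ) (x : Fin n → ℝ) : Prop :=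
  IsOpen W ∧ t0 ∈ W ∧ τ t0 = x ∧ ContDiffOn ℝ 2 τ W ∧ Set.InjOn τ W ∧
    ∃ U : Set (Fin n → ℝ), IsOpen U ∧ x ∈ U ∧ τ '' W = M ∩ U

/-- `x` is a nondegenerate critical point of `f : M → ℝ` (`M` of dimension `d`): in some local
`C^2` parametrization `τ` around `x`, the Hessian of `f ∘ τ` is invertible. -/
def IsNondegCritPt (n d : ℕ) (M : Set (Fin n → ℝ)) (f : (Fin n → ℝ) → ℝ)
    (x : Fin n → ℝ) : Prop :=
  IsCriticalPt n M f x ∧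
    ∃ (τ : (Fin d → ℝ) → Fin n → ℝ) (W : Set (Fin d → ℝ)) (t0 : Fin d → ℝ),
      IsLocalParamAt n d M τ W t0 x ∧
      (Matrix.of fun i j : Fin d => hessianEntry (f ∘ τ) t0 i j).det ≠ 0

/-- `f` is a Morse function on the `d`-dimensional submanifold `M`. -/
def IsMorseOn (n d : ℕ) (M : Set (Fin n → ℝ)) (f : (Fin n → ℝ) → ℝ) : Prop :=
  ∀ x, IsCriticalPt n M f x → IsNondegCritPt n d M f x

/-- `g` lies in the basic `C^2` neighborhood `V_{h,ε}`: `|g-h| < ε`, `|D_j(g-h)| < ε` and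
`|D_{j1}D_{j2}(g-h)| < ε` on `M` for all `j, j1, j2`. -/
def InC2Ball (n : ℕ) (M : Set (Fin n → ℝ)) (h g : (Fin n → ℝ) → ℝ) (ε : ℝ) : Prop :=
  (∀ x ∈ M, |g x - h x| < ε) ∧
  ∃ (D1 : Fin n → (Fin n → ℝ) → ℝ) (D2 : Fin n → Fin n → (Fin n → ℝ) → ℝ),
    (∀ j, IsDerivField n M (fun x => g x - h x) j (D1 j)) ∧
    (∀ j1 j2, IsDerivField n M (D1 j2) j1 (D2 j1 j2)) ∧
    (∀ j, ∀ x ∈ M, |D1 j x| < ε) ∧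
    (∀ j1 j2, ∀ x ∈ M, |D2 j1 j2 x| < ε)

/-- A definable `C^2` function on `M`. -/
def DefC2Fun (L : FirstOrder.Language) [L.Structure ℝ] (n : ℕ) (M : Set (Fin n → ℝ))
    (f : (Fin n → ℝ) → ℝ) : Prop :=
  DefFun L n M f ∧ CrOn 2 M f

/-- The definable `C^2` topology on `D^2(M)`, generated by the basic neighborhoods `V_{h,ε}`. -/
def C2Topology (L : FirstOrder.Language) [L.Structure ℝ] (n : ℕ) (M : Set (Fin n → ℝ)) :
    TopologicalSpace {f : (Fin n → ℝ) → ℝ // DefC2Fun L n M f} :=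
  TopologicalSpace.generateFrom
    {S | ∃ (h : {f : (Fin n → ℝ) → ℝ // DefC2Fun L n M f}) (ε : ℝ), 0 < ε ∧
      S = {g | InC2Ball n M h.1 g.1 ε}}

/-- The coordinate projection `ℝ^n → ℝ^d` selecting the coordinates `σ 0, …, σ (d-1)`. -/
def coordProj {n d : ℕ} (σ : Fin d → Fin n) (x : Fin n → ℝ) : Fin d → ℝ := fun i => x (σ i)

/-- The open box with corners `a`, `b`. -/
def openBox {n : ℕ} (a b : Fin n → ℝ) : Set (Fin n → ℝ) := {y | ∀ i, a i < y i ∧ y i < b i}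

/-- The multi-valued graph condition at `x`: there is an open box `U ∋ x` and a definable `C^r`
section `τ : π(U) → ℝ^n` of the coordinate projection `π = coordProj σ` with
`M' ∩ U = τ(π(U))`. -/
def MVGraphPointAt (L : FirstOrder.Language) [L.Structure ℝ] (r n d : ℕ) (σ : Fin d → Fin n)
    (M' : Set (Fin n → ℝ)) (x : Fin n → ℝ) : Prop :=
  ∃ a b : Fin n → ℝ, x ∈ openBox a b ∧
    ∃ τ : (Fin d → ℝ) → Fin n → ℝ,
      CrOn r (coordProj σ '' openBox a b) τ ∧
      DefMap L d n (coordProj σ '' openBox a b) τ ∧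
      M' ∩ openBox a b = τ '' (coordProj σ '' openBox a b) ∧
      ∀ y ∈ coordProj σ '' openBox a b, coordProj σ (τ y) = y

/-- A definable `C^r` multi-valued graph with respect to the coordinate projection `coordProj σ`. -/
def IsMVGraph (L : FirstOrder.Language) [L.Structure ℝ] (r n d : ℕ) (σ : Fin d → Fin n)
    (M' : Set (Fin n → ℝ)) : Prop :=
  IsDefCrSubmanifold L r n d M' ∧ ∀ x ∈ M', MVGraphPointAt L r n d σ M' x

/-- The image of the differential `df_x : T_x M → ℝ^k` of `f : M → ℝ^k` at `x`. -/
def diffImage (m k : ℕ) (M : Set (Fin m → ℝ)) (f : (Fin m → ℝ) → Fin k → ℝ)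
    (x : Fin m → ℝ) : Submodule ℝ (Fin k → ℝ) :=
  Submodule.span ℝ
    {w | ∃ (γ : ℝ → Fin m → ℝ) (v : Fin m → ℝ), γ 0 = x ∧ (∀ᶠ t in 𝓝 (0 : ℝ), γ t ∈ M) ∧
      HasDerivAt γ v 0 ∧ HasDerivAt (f ∘ γ) w 0}

/-- The set of critical values of `f : M → ℝ^k`: images of points where `df_x` is not
surjective. -/
def criticalValues (m k : ℕ) (M : Set (Fin m → ℝ)) (f : (Fin m → ℝ) → Fin k → ℝ) :
    Set (Fin k → ℝ) :=
  f '' {x ∈ M | diffImage m k M f x ≠ ⊤}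



/-- Multi-valued graph condition at a point (no definability requirement). -/
def MVGraphPointAtPlain (r n d : ℕ) (σ : Fin d → Fin n) (M' : Set (Fin n → ℝ))
    (x : Fin n → ℝ) : Prop :=
  ∃ a b : Fin n → ℝ, x ∈ openBox a b ∧
    ∃ τ : (Fin d → ℝ) → Fin n → ℝ,
      CrOn r (coordProj σ '' openBox a b) τ ∧
      M' ∩ openBox a b = τ '' (coordProj σ '' openBox a b) ∧
      ∀ y ∈ coordProj σ '' openBox a b, coordProj σ (τ y) = y

/-- A `C^r` multi-valued graph with respect to `coordProj σ` (no definability requirement). -/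
def IsMVGraphPlain (r n d : ℕ) (σ : Fin d → Fin n) (M' : Set (Fin n → ℝ)) : Prop :=
  IsCrSubmanifold r n d M' ∧ ∀ x ∈ M', MVGraphPointAtPlain r n d σ M' x

noncomputable section

variable {n d : ℕ}

/-- Linear embedding of `ℝ^d` into the first `d` coordinates of `ℝ^n`. -/
def embL (hdn : d ≤ n) : (Fin d → ℝ) →L[ℝ] (Fin n → ℝ) :=
  ContinuousLinearMap.pi fun i : Fin n =>
    if h : (i : ℕ) < d then ContinuousLinearMap.proj ⟨i, h⟩ else 0

/-- Linear projection of `ℝ^n` onto the first `d` coordinates. -/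
def prjL (hdn : d ≤ n) : (Fin n → ℝ) →L[ℝ] (Fin d → ℝ) :=
  ContinuousLinearMap.pi fun l : Fin d => ContinuousLinearMap.proj (Fin.castLE hdn l)

lemma embL_apply (hdn : d ≤ n) (t : Fin d → ℝ) (i : Fin n) :
    embL hdn t i = if h : (i : ℕ) < d then t ⟨i, h⟩ else 0 := by
  simp only [embL, ContinuousLinearMap.pi_apply]
  split <;> simp_all

lemma prjL_apply (hdn : d ≤ n) (y : Fin n → ℝ) (l : Fin d) :
    prjL hdn y l = y (Fin.castLE hdn l) := rfl

lemma prjL_embL (hdn : d ≤ n) (t : Fin d → ℝ) : prjL hdn (embL hdn t) = t := by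
  funext l
  rw [prjL_apply, embL_apply]
  have h : ((Fin.castLE hdn l : Fin n) : ℕ) < d := l.2
  rw [dif_pos h]
  exact congrArg t (Fin.ext rfl)

lemma embL_apply_of_ge (hdn : d ≤ n) (t : Fin d → ℝ) (i : Fin n) (hi : d ≤ (i : ℕ)) :
    embL hdn t i = 0 := by
  rw [embL_apply, dif_neg (by omega)]

lemma embL_prjL (hdn : d ≤ n) (y : Fin n → ℝ) (hy : ∀ i : Fin n, d ≤ (i : ℕ) → y i = 0) :
    embL hdn (prjL hdn y) = y := by
  funext i
  rw [embL_apply]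
  split
  · rfl
  · exact (hy i (by omega)).symm

/-- A `C^2` chart for the submanifold `M`. -/
structure Chart (n d : ℕ) (M : Set (Fin n → ℝ)) : Type where
  U : Set (Fin n → ℝ)
  V : Set (Fin n → ℝ)
  φ : (Fin n → ℝ) → Fin n → ℝ
  ψ : (Fin n → ℝ) → Fin n → ℝ
  openU : IsOpen U
  openV : IsOpen V
  cφ : ContDiffOn ℝ 2 φ U
  cψ : ContDiffOn ℝ 2 ψ V
  mapφ : Set.MapsTo φ U V
  mapψ : Set.MapsTo ψ V U
  linv : ∀ y ∈ U, ψ (φ y) = y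
  rinv : ∀ y ∈ V, φ (ψ y) = y
  flat : M ∩ U = U ∩ φ ⁻¹' {y : Fin n → ℝ | ∀ i : Fin n, d ≤ (i : ℕ) → y i = 0}

lemma exists_chart {M : Set (Fin n → ℝ)} (hM : IsCrSubmanifold 2 n d M) {x : Fin n → ℝ}
    (hx : x ∈ M) : ∃ c : Chart n d M, x ∈ c.U := by
  obtain ⟨U, V, φ, ψ, hU, hxU, hV, hφ, hψ, hm1, hm2, hli, hri, _, hflat⟩ := hM x hx
  exact ⟨⟨U, V, φ, ψ, hU, hV, hφ, hψ, hm1, hm2, hli, hri, hflat⟩, hxU⟩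

namespace Chart

variable {M : Set (Fin n → ℝ)} (c : Chart n d M) (hdn : d ≤ n)

/-- Local parametrization induced by the chart. -/
def τ : (Fin d → ℝ) → Fin n → ℝ := fun t => c.ψ (embL hdn t)

/-- Local inverse of the parametrization, defined ambiently. -/
def ρ : (Fin n → ℝ) → Fin d → ℝ := fun y => prjL hdn (c.φ y)

/-- Domain of the parametrization. -/
def W : Set (Fin d → ℝ) := embL hdn ⁻¹' c.V

lemma openW : IsOpen (c.W hdn) := c.openV.preimage (embL hdn).continuous

lemma mem_flat {y : Fin n → ℝ} (hy : y ∈ M ∩ c.U) (i : Fin n) (hi : d ≤ (i : ℕ)) :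
    c.φ y i = 0 := by
  have := c.flat ▸ hy
  exact this.2 i hi

lemma embL_rho {y : Fin n → ℝ} (hy : y ∈ M ∩ c.U) : embL hdn (c.ρ hdn y) = c.φ y :=
  embL_prjL hdn _ (c.mem_flat hy)

lemma rho_mem_W {y : Fin n → ℝ} (hy : y ∈ M ∩ c.U) : c.ρ hdn y ∈ c.W hdn := by
  have h : embL hdn (c.ρ hdn y) = c.φ y := c.embL_rho hdn hy
  simp only [W, Set.mem_preimage, h]
  exact c.mapφ hy.2

lemma tau_rho {y : Fin n → ℝ} (hy : y ∈ M ∩ c.U) : c.τ hdn (c.ρ hdn y) = y := by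
  simp only [τ, c.embL_rho hdn hy]
  exact c.linv y hy.2

lemma tau_mem {t : Fin d → ℝ} (ht : t ∈ c.W hdn) : c.τ hdn t ∈ M ∩ c.U := by
  have h1 : c.ψ (embL hdn t) ∈ c.U := c.mapψ ht
  have h2 : c.φ (c.ψ (embL hdn t)) = embL hdn t := c.rinv _ ht
  rw [c.flat]
  refine ⟨h1, ?_⟩
  intro i hi
  show c.φ (c.τ hdn t) i = 0
  have : c.φ (c.τ hdn t) = embL hdn t := h2
  rw [this]
  exact embL_apply_of_ge hdn t i hi

lemma rho_tau {t : Fin d → ℝ} (ht : t ∈ c.W hdn) : c.ρ hdn (c.τ hdn t) = t := by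
  simp only [ρ, τ, c.rinv _ ht, prjL_embL]

lemma contDiffAt_tau {t : Fin d → ℝ} (ht : t ∈ c.W hdn) :
    ContDiffAt ℝ 2 (c.τ hdn) t := by
  have h1 : ContDiffAt ℝ 2 c.ψ (embL hdn t) := c.cψ.contDiffAt (c.openV.mem_nhds ht)
  exact h1.comp t ((embL hdn).contDiff.contDiffAt)

lemma contDiffAt_rho {y : Fin n → ℝ} (hy : y ∈ c.U) :
    ContDiffAt ℝ 2 (c.ρ hdn) y := by
  have h1 : ContDiffAt ℝ 2 c.φ y := c.cφ.contDiffAt (c.openU.mem_nhds hy)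
  exact ((prjL hdn).contDiff.contDiffAt).comp y h1

lemma diffAt_tau {t : Fin d → ℝ} (ht : t ∈ c.W hdn) :
    DifferentiableAt ℝ (c.τ hdn) t :=
  (c.contDiffAt_tau hdn ht).differentiableAt two_ne_zero

lemma diffAt_rho {y : Fin n → ℝ} (hy : y ∈ c.U) :
    DifferentiableAt ℝ (c.ρ hdn) y :=
  (c.contDiffAt_rho hdn hy).differentiableAt two_ne_zero

lemma rho_tau_fderiv {t : Fin d → ℝ} (ht : t ∈ c.W hdn) (v : Fin d → ℝ) :
    fderiv ℝ (c.ρ hdn) (c.τ hdn t) (fderiv ℝ (c.τ hdn) t v) = v := by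
  have hev : (fun s => c.ρ hdn (c.τ hdn s)) =ᶠ[nhds t] id := by
    filter_upwards [(c.openW hdn).mem_nhds ht] with s hs
    exact c.rho_tau hdn hs
  have h1 : fderiv ℝ (fun s => c.ρ hdn (c.τ hdn s)) t
      = fderiv ℝ (id : (Fin d → ℝ) → Fin d → ℝ) t := hev.fderiv_eq
  have h2 : fderiv ℝ (fun s => c.ρ hdn (c.τ hdn s)) t =
      (fderiv ℝ (c.ρ hdn) (c.τ hdn t)).comp (fderiv ℝ (c.τ hdn) t) :=
    fderiv_comp t (c.diffAt_rho hdn (c.tau_mem hdn ht).2) (c.diffAt_tau hdn ht)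
  have h3 : (fderiv ℝ (c.ρ hdn) (c.τ hdn t)).comp (fderiv ℝ (c.τ hdn) t)
      = ContinuousLinearMap.id ℝ (Fin d → ℝ) := by
    rw [← h2, h1, fderiv_id]
  have := ContinuousLinearMap.ext_iff.mp h3 v
  simpa using this

end Chart

end
noncomputable section

open Matrix

variable {n d : ℕ}

lemma hasDerivAt_line (t v : Fin d → ℝ) :
    HasDerivAt (fun s : ℝ => t + s • v) v 0 := by
  simpa using ((hasDerivAt_id (0:ℝ)).smul_const v).const_add t

namespace Chart

variable {M : Set (Fin n → ℝ)} (c : Chart n d M) (hdn : d ≤ n)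

lemma curve_mem_curveDerivs {t : Fin d → ℝ} (ht : t ∈ c.W hdn) (v : Fin d → ℝ) :
    fderiv ℝ (c.τ hdn) t v ∈ curveDerivs n M (c.τ hdn t) := by
  refine ⟨fun s : ℝ => c.τ hdn (t + s • v), by simp, ?_, ?_⟩
  · have hcont : ContinuousAt (fun s : ℝ => t + s • v) 0 := (hasDerivAt_line t v).continuousAt
    have hmem : ∀ᶠ s in nhds (0:ℝ), t + s • v ∈ c.W hdn := by
      have : c.W hdn ∈ nhds (t + (0:ℝ) • v) := by
        simpa using (c.openW hdn).mem_nhds ht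
      exact hcont.eventually_mem this
    filter_upwards [hmem] with s hs
    exact (c.tau_mem hdn hs).1
  · have hd : HasFDerivAt (c.τ hdn) (fderiv ℝ (c.τ hdn) t) (t + (0:ℝ) • v) := by
      simpa using (c.diffAt_tau hdn ht).hasFDerivAt
    exact hd.comp_hasDerivAt 0 (hasDerivAt_line t v)

lemma curveDerivs_sub {t : Fin d → ℝ} (ht : t ∈ c.W hdn) {v : Fin n → ℝ}
    (hv : v ∈ curveDerivs n M (c.τ hdn t)) :
    v = fderiv ℝ (c.τ hdn) t (fderiv ℝ (c.ρ hdn) (c.τ hdn t) v) := by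
  obtain ⟨γ, hγ0, hγM, hγd⟩ := hv
  have hcont : ContinuousAt γ 0 := hγd.continuousAt
  have hU : ∀ᶠ s in nhds (0:ℝ), γ s ∈ c.U := by
    have : c.U ∈ nhds (γ 0) := by rw [hγ0]; exact c.openU.mem_nhds (c.tau_mem hdn ht).2
    exact hcont.eventually_mem this
  have hMU : ∀ᶠ s in nhds (0:ℝ), γ s ∈ M ∩ c.U := hγM.and hU
  have heq : (fun s => c.τ hdn (c.ρ hdn (γ s))) =ᶠ[nhds (0:ℝ)] γ := by
    filter_upwards [hMU] with s hs
    exact c.tau_rho hdn hs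
  have hδ : HasDerivAt (fun s => c.ρ hdn (γ s)) (fderiv ℝ (c.ρ hdn) (c.τ hdn t) v) 0 := by
    have hd : HasFDerivAt (c.ρ hdn) (fderiv ℝ (c.ρ hdn) (c.τ hdn t)) (γ 0) := by
      rw [hγ0]; exact (c.diffAt_rho hdn (c.tau_mem hdn ht).2).hasFDerivAt
    exact hd.comp_hasDerivAt 0 hγd
  have hδ0 : c.ρ hdn (γ 0) = t := by rw [hγ0]; exact c.rho_tau hdn ht
  have hcomp : HasDerivAt (fun s => c.τ hdn (c.ρ hdn (γ s)))
      (fderiv ℝ (c.τ hdn) t (fderiv ℝ (c.ρ hdn) (c.τ hdn t) v)) 0 := by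
    have hd : HasFDerivAt (c.τ hdn) (fderiv ℝ (c.τ hdn) t) (c.ρ hdn (γ 0)) := by
      rw [hδ0]; exact (c.diffAt_tau hdn ht).hasFDerivAt
    exact hd.comp_hasDerivAt 0 hδ
  have : HasDerivAt γ (fderiv ℝ (c.τ hdn) t (fderiv ℝ (c.ρ hdn) (c.τ hdn t) v)) 0 :=
    hcomp.congr_of_eventuallyEq heq.symm
  exact (hγd.unique this)

lemma tangentAt_eq_range {t : Fin d → ℝ} (ht : t ∈ c.W hdn) :
    TangentAt n M (c.τ hdn t) = LinearMap.range (fderiv ℝ (c.τ hdn) t : (Fin d → ℝ) →ₗ[ℝ] Fin n → ℝ) := by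
  apply le_antisymm
  · rw [TangentAt, Submodule.span_le]
    intro v hv
    exact ⟨_, (c.curveDerivs_sub hdn ht hv).symm⟩
  · rintro v ⟨u, rfl⟩
    exact Submodule.subset_span (c.curve_mem_curveDerivs hdn ht u)

end Chart

-- dot product basics
lemma dot_eq_dotProduct (u v : Fin n → ℝ) : dot u v = dotProduct u v := rfl

lemma dot_self_eq_zero {v : Fin n → ℝ} (h : dot v v = 0) : v = 0 := by
  have h' : ∑ i, v i * v i = 0 := h
  funext i
  have hnn : ∀ j ∈ Finset.univ, (0:ℝ) ≤ v j * v j := fun j _ => mul_self_nonneg _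
  have := (Finset.sum_eq_zero_iff_of_nonneg hnn).mp h' i (Finset.mem_univ i)
  exact mul_self_eq_zero.mp this

lemma isOrthProjOnto_unique {T : Submodule ℝ (Fin n → ℝ)} {v p q : Fin n → ℝ}
    (hp : IsOrthProjOnto T v p) (hq : IsOrthProjOnto T v q) : p = q := by
  have hpq : p - q ∈ T := T.sub_mem hp.1 hq.1
  have h1 := hp.2 _ hpq
  have h2 := hq.2 _ hpq
  have h3 : dot (p - q) (p - q) = 0 := by
    have hrw : p - q = (v - q) - (v - p) := by abel
    rw [dot_eq_dotProduct] at h1 h2 ⊢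
    nth_rewrite 1 [hrw]
    rw [sub_dotProduct, h1, h2, sub_zero]
  exact sub_eq_zero.mp (dot_self_eq_zero h3)

lemma isOrthProjOnto_self {T : Submodule ℝ (Fin n → ℝ)} {v : Fin n → ℝ} (hv : v ∈ T) :
    IsOrthProjOnto T v v := by
  refine ⟨hv, fun w _ => ?_⟩
  simp [dot_eq_dotProduct, sub_dotProduct]

lemma isOrthProjOnto_sum {T : Submodule ℝ (Fin n → ℝ)} {k : ℕ} (a : Fin k → ℝ)
    (v p : Fin k → Fin n → ℝ) (h : ∀ m, IsOrthProjOnto T (v m) (p m)) :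
    IsOrthProjOnto T (∑ m, a m • v m) (∑ m, a m • p m) := by
  refine ⟨Submodule.sum_mem _ fun m _ => T.smul_mem _ (h m).1, fun w hw => ?_⟩
  have hsub : (∑ m, a m • v m) - (∑ m, a m • p m) = ∑ m, a m • (v m - p m) := by
    rw [← Finset.sum_sub_distrib]
    congr 1; funext m; rw [smul_sub]
  rw [hsub, dot_eq_dotProduct]
  have hsum : dotProduct (∑ m, a m • (v m - p m)) w
      = ∑ m, dotProduct (a m • (v m - p m)) w := by
    simp only [dotProduct, Finset.sum_apply, Finset.sum_mul]
    exact Finset.sum_comm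
  rw [hsum]
  refine Finset.sum_eq_zero fun m _ => ?_
  rw [smul_dotProduct]
  have := (h m).2 w hw
  rw [dot_eq_dotProduct] at this
  rw [this, smul_zero]

end
noncomputable section

open Matrix

variable {n d : ℕ}

lemma pi_single_expand (v : Fin d → ℝ) : v = ∑ l, v l • (Pi.single l 1 : Fin d → ℝ) := by
  funext j
  simp [Pi.single_apply, Finset.sum_apply, mul_ite]

namespace Chart

variable {M : Set (Fin n → ℝ)} (c : Chart n d M) (hdn : d ≤ n)

/-- Matrix of the differential of the parametrization. -/
def Amat (t : Fin d → ℝ) : Matrix (Fin n) (Fin d) ℝ :=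
  fun i l => fderiv ℝ (c.τ hdn) t (Pi.single l 1) i

/-- Gram matrix of the differential. -/
def Gmat (t : Fin d → ℝ) : Matrix (Fin d) (Fin d) ℝ := (c.Amat hdn t)ᵀ * c.Amat hdn t

/-- Coefficient vector of the orthogonal projection of `e_j` in the chart basis. -/
def cvec (t : Fin d → ℝ) (j : Fin n) : Fin d → ℝ :=
  ((c.Gmat hdn t).det)⁻¹ • (c.Gmat hdn t).cramer fun l => c.Amat hdn t j l

/-- Orthogonal projection of `e_j` onto the tangent space, at a chart point. -/
def pvec (t : Fin d → ℝ) (j : Fin n) : Fin n → ℝ := fderiv ℝ (c.τ hdn) t (c.cvec hdn t j)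

lemma fderiv_tau_eq_mulVec (t : Fin d → ℝ) (v : Fin d → ℝ) :
    fderiv ℝ (c.τ hdn) t v = c.Amat hdn t *ᵥ v := by
  conv_lhs => rw [pi_single_expand v, map_sum]
  funext i
  simp only [Matrix.mulVec, dotProduct, Finset.sum_apply]
  refine Finset.sum_congr rfl fun l _ => ?_
  rw [_root_.map_smul]
  simp [Amat, mul_comm]

lemma mulVec_inj {t : Fin d → ℝ} (ht : t ∈ c.W hdn) {v : Fin d → ℝ}
    (hv : c.Amat hdn t *ᵥ v = 0) : v = 0 := by
  have h1 := c.rho_tau_fderiv hdn ht v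
  rw [c.fderiv_tau_eq_mulVec hdn t v, hv] at h1
  rw [← h1, map_zero]

lemma posDef_Gmat {t : Fin d → ℝ} (ht : t ∈ c.W hdn) : (c.Gmat hdn t).PosDef := by
  set A := c.Amat hdn t
  refine Matrix.PosDef.of_dotProduct_mulVec_pos ?_ ?_
  · show (Aᵀ * A)ᴴ = Aᵀ * A
    ext i j
    simp only [Matrix.conjTranspose_apply, Matrix.mul_apply, Matrix.transpose_apply,
      star_trivial]
    exact Finset.sum_congr rfl fun k _ => mul_comm _ _
  · intro x hx
    have hw : A *ᵥ x ≠ 0 := fun h => hx (c.mulVec_inj hdn ht h)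
    have hcalc : dotProduct (star x) (c.Gmat hdn t *ᵥ x)
        = dotProduct (A *ᵥ x) (A *ᵥ x) := by
      have hstar : star x = x := funext fun i => star_trivial _
      rw [hstar, Gmat, ← Matrix.mulVec_mulVec, Matrix.dotProduct_mulVec,
        Matrix.vecMul_transpose]
    rw [hcalc]
    obtain ⟨i, hi⟩ := Function.ne_iff.mp hw
    refine Finset.sum_pos' (fun j _ => mul_self_nonneg _) ⟨i, Finset.mem_univ i, ?_⟩
    have hne : (A *ᵥ x) i ≠ 0 := by simpa using hi
    exact mul_self_pos.mpr hne

lemma det_Gmat_ne {t : Fin d → ℝ} (ht : t ∈ c.W hdn) : (c.Gmat hdn t).det ≠ 0 :=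
  (c.posDef_Gmat hdn ht).det_pos.ne'

lemma Gmat_mulVec_cvec {t : Fin d → ℝ} (ht : t ∈ c.W hdn) (j : Fin n) :
    c.Gmat hdn t *ᵥ c.cvec hdn t j = fun l => c.Amat hdn t j l := by
  rw [cvec, Matrix.mulVec_smul, Matrix.mulVec_cramer, smul_smul,
    inv_mul_cancel₀ (c.det_Gmat_ne hdn ht), one_smul]

lemma isOrthProj_pvec {t : Fin d → ℝ} (ht : t ∈ c.W hdn) (j : Fin n) :
    IsOrthProjOnto (TangentAt n M (c.τ hdn t)) (Pi.single j 1) (c.pvec hdn t j) := by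
  constructor
  · rw [c.tangentAt_eq_range hdn ht]
    exact ⟨_, rfl⟩
  · intro w hw
    rw [c.tangentAt_eq_range hdn ht] at hw
    obtain ⟨u, rfl⟩ := hw
    rw [ContinuousLinearMap.coe_coe]
    rw [pvec, c.fderiv_tau_eq_mulVec hdn t u, c.fderiv_tau_eq_mulVec hdn t]
    set A := c.Amat hdn t
    rw [dot_eq_dotProduct, Matrix.dotProduct_mulVec]
    have hvm : ∀ a : Fin n → ℝ, a ᵥ* A = Aᵀ *ᵥ a := by
      intro a
      funext l
      simp only [Matrix.vecMul, Matrix.mulVec, dotProduct, Matrix.transpose_apply]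
      exact Finset.sum_congr rfl fun i _ => mul_comm _ _
    rw [hvm, Matrix.mulVec_sub, Matrix.mulVec_mulVec]
    have h1 : Aᵀ *ᵥ Pi.single j 1 = fun l => A j l := by
      rw [Matrix.mulVec_single]
      funext l
      simp [Matrix.transpose_apply]
    have h2 : (Aᵀ * A) *ᵥ c.cvec hdn t j = fun l => A j l := c.Gmat_mulVec_cvec hdn ht j
    rw [h1, h2, sub_self, zero_dotProduct]

lemma single_eq_sum_cvec {t : Fin d → ℝ} (ht : t ∈ c.W hdn) (k : Fin d) :
    Pi.single k (1:ℝ) = ∑ m : Fin n, c.Amat hdn t m k • c.cvec hdn t m := by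
  set A := c.Amat hdn t
  have hcolT : fderiv ℝ (c.τ hdn) t (Pi.single k 1) ∈ TangentAt n M (c.τ hdn t) := by
    rw [c.tangentAt_eq_range hdn ht]; exact ⟨_, rfl⟩
  have hcol : fderiv ℝ (c.τ hdn) t (Pi.single k 1) = ∑ m : Fin n, A m k • (Pi.single m 1 : Fin n → ℝ) := by
    rw [c.fderiv_tau_eq_mulVec hdn, Matrix.mulVec_single]
    funext i
    simp [Pi.single_apply, Finset.sum_apply, mul_ite]
    rfl
  have h1 : IsOrthProjOnto (TangentAt n M (c.τ hdn t)) (∑ m : Fin n, A m k • (Pi.single m 1 : Fin n → ℝ))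
      (fderiv ℝ (c.τ hdn) t (Pi.single k 1)) := by
    rw [← hcol]
    exact isOrthProjOnto_self hcolT
  have h2 : IsOrthProjOnto (TangentAt n M (c.τ hdn t)) (∑ m : Fin n, A m k • (Pi.single m 1 : Fin n → ℝ))
      (∑ m : Fin n, A m k • c.pvec hdn t m) :=
    isOrthProjOnto_sum _ _ _ fun m => c.isOrthProj_pvec hdn ht m
  have h3 := isOrthProjOnto_unique h1 h2
  have h4 := congrArg (fderiv ℝ (c.ρ hdn) (c.τ hdn t)) h3
  rw [_root_.map_sum] at h4
  calc Pi.single k (1:ℝ) = fderiv ℝ (c.ρ hdn) (c.τ hdn t) (fderiv ℝ (c.τ hdn) t (Pi.single k 1)) :=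
        (c.rho_tau_fderiv hdn ht _).symm
    _ = ∑ m : Fin n, A m k • c.cvec hdn t m := by
        rw [h4]
        refine Finset.sum_congr rfl fun m _ => ?_
        rw [_root_.map_smul]
        congr 1
        exact c.rho_tau_fderiv hdn ht _

end Chart

end
noncomputable section

open Matrix

variable {n d : ℕ}

lemma clm_expand {F : Type*} [NormedAddCommGroup F] [NormedSpace ℝ F]
    (L : (Fin d → ℝ) →L[ℝ] F) (w : Fin d → ℝ) :
    L w = ∑ l, w l • L (Pi.single l 1) := by
  conv_lhs => rw [pi_single_expand w, map_sum]
  exact Finset.sum_congr rfl fun l _ => by rw [_root_.map_smul]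

lemma differentiableAt_det {k : ℕ} {N : (Fin d → ℝ) → Matrix (Fin k) (Fin k) ℝ} {t : Fin d → ℝ}
    (hN : ∀ i j, DifferentiableAt ℝ (fun s => N s i j) t) :
    DifferentiableAt ℝ (fun s => (N s).det) t := by
  have hfun : (fun s => (N s).det)
      = fun s => ∑ σ : Equiv.Perm (Fin k), ((Equiv.Perm.sign σ : ℤ) : ℝ) * ∏ i, N s (σ i) i := by
    funext s
    rw [Matrix.det_apply']
  rw [hfun]
  refine DifferentiableAt.fun_sum fun σ _ => DifferentiableAt.const_mul ?_ _
  exact (HasFDerivAt.finset_prod fun i _ => (hN (σ i) i).hasFDerivAt).differentiableAt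

namespace Chart

variable {M : Set (Fin n → ℝ)} (c : Chart n d M) (hdn : d ≤ n)

lemma contDiffOn_tau : ContDiffOn ℝ 2 (c.τ hdn) (c.W hdn) :=
  fun s hs => (c.contDiffAt_tau hdn hs).contDiffWithinAt

lemma fderiv_tau_differentiableAt {t : Fin d → ℝ} (ht : t ∈ c.W hdn) :
    DifferentiableAt ℝ (fderiv ℝ (c.τ hdn)) t := by
  have h1 : ContDiffOn ℝ 1 (fderiv ℝ (c.τ hdn)) (c.W hdn) :=
    (c.contDiffOn_tau hdn).fderiv_of_isOpen (c.openW hdn) (by norm_num)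
  exact (h1.differentiableOn one_ne_zero).differentiableAt ((c.openW hdn).mem_nhds ht)

lemma Amat_differentiableAt {t : Fin d → ℝ} (ht : t ∈ c.W hdn) (i : Fin n) (l : Fin d) :
    DifferentiableAt ℝ (fun s => c.Amat hdn s i l) t := by
  have h1 : DifferentiableAt ℝ (fun s => fderiv ℝ (c.τ hdn) s (Pi.single l 1)) t :=
    (c.fderiv_tau_differentiableAt hdn ht).clm_apply (differentiableAt_const _)
  exact (ContinuousLinearMap.proj (R := ℝ) (φ := fun _ : Fin n => ℝ) i).differentiableAt.comp t h1

lemma Gmat_differentiableAt {t : Fin d → ℝ} (ht : t ∈ c.W hdn) (l m : Fin d) :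
    DifferentiableAt ℝ (fun s => c.Gmat hdn s l m) t := by
  have : (fun s => c.Gmat hdn s l m) = fun s => ∑ i, c.Amat hdn s i l * c.Amat hdn s i m := by
    funext s
    simp [Gmat, Matrix.mul_apply, Matrix.transpose_apply]
  rw [this]
  exact DifferentiableAt.fun_sum fun i _ =>
    (c.Amat_differentiableAt hdn ht i l).mul (c.Amat_differentiableAt hdn ht i m)

lemma cvec_differentiableAt {t : Fin d → ℝ} (ht : t ∈ c.W hdn) (j : Fin n) :
    DifferentiableAt ℝ (fun s => c.cvec hdn s j) t := by
  rw [differentiableAt_pi]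
  intro l
  have hdet : DifferentiableAt ℝ (fun s => (c.Gmat hdn s).det) t :=
    differentiableAt_det fun i j' => c.Gmat_differentiableAt hdn ht i j'
  have hinv : DifferentiableAt ℝ (fun s => ((c.Gmat hdn s).det)⁻¹) t :=
    hdet.inv (c.det_Gmat_ne hdn ht)
  have hcram : DifferentiableAt ℝ
      (fun s => (c.Gmat hdn s).cramer (fun l' => c.Amat hdn s j l') l) t := by
    have : (fun s => (c.Gmat hdn s).cramer (fun l' => c.Amat hdn s j l') l)
        = fun s => ((c.Gmat hdn s).updateCol l (fun l' => c.Amat hdn s j l')).det := by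
      funext s
      rw [Matrix.cramer_apply]
    rw [this]
    refine differentiableAt_det fun a b => ?_
    by_cases hb : b = l
    · subst hb
      simp only [Matrix.updateCol_apply, if_pos rfl]
      exact c.Amat_differentiableAt hdn ht j a
    · simp only [Matrix.updateCol_apply, if_neg hb]
      exact c.Gmat_differentiableAt hdn ht a b
  have : (fun s => c.cvec hdn s j l)
      = fun s => ((c.Gmat hdn s).det)⁻¹ * (c.Gmat hdn s).cramer (fun l' => c.Amat hdn s j l') l := by
    funext s
    simp [cvec]
  rw [this]
  exact hinv.mul hcram

/-- Composition of a `C^2` function on `M` with the chart parametrization is `C^2`. -/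
lemma contDiffAt_comp_tau {f : (Fin n → ℝ) → ℝ} (hf : CrOn 2 M f) {t : Fin d → ℝ}
    (ht : t ∈ c.W hdn) : ContDiffAt ℝ 2 (fun s => f (c.τ hdn s)) t := by
  obtain ⟨U', hU'o, hU'm, g, hg, heq⟩ := hf.2 one_le_two (c.τ hdn t) (c.tau_mem hdn ht).1
  have hτc : ContinuousOn (c.τ hdn) (c.W hdn) :=
    fun s hs => (c.contDiffAt_tau hdn hs).continuousAt.continuousWithinAt
  have hO : IsOpen (c.W hdn ∩ c.τ hdn ⁻¹' U') :=
    hτc.isOpen_inter_preimage (c.openW hdn) hU'o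
  have htO : t ∈ c.W hdn ∩ c.τ hdn ⁻¹' U' := ⟨ht, hU'm⟩
  have hgt : ContDiffAt ℝ 2 (fun s => g (c.τ hdn s)) t :=
    (hg.contDiffAt (hU'o.mem_nhds hU'm)).comp t (c.contDiffAt_tau hdn ht)
  refine hgt.congr_of_eventuallyEq ?_
  filter_upwards [hO.mem_nhds htO] with s hs
  exact (heq ⟨(c.tau_mem hdn hs.1).1, hs.2⟩).symm

/-- The derivative of a function along a curve in `M` is determined by the chart. -/
lemma deriv_along_eq {t : Fin d → ℝ} (ht : t ∈ c.W hdn) (u : (Fin n → ℝ) → ℝ)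
    (hu : DifferentiableAt ℝ (fun s => u (c.τ hdn s)) t) {γ : ℝ → Fin n → ℝ}
    {p : Fin n → ℝ} {cc : ℝ} (hγ0 : γ 0 = c.τ hdn t) (hγM : ∀ᶠ s in nhds (0:ℝ), γ s ∈ M)
    (hγd : HasDerivAt γ p 0) (hcc : HasDerivAt (u ∘ γ) cc 0) :
    cc = fderiv ℝ (fun s => u (c.τ hdn s)) t (fderiv ℝ (c.ρ hdn) (c.τ hdn t) p) := by
  have hcont : ContinuousAt γ 0 := hγd.continuousAt
  have hU : ∀ᶠ s in nhds (0:ℝ), γ s ∈ c.U := by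
    have : c.U ∈ nhds (γ 0) := by rw [hγ0]; exact c.openU.mem_nhds (c.tau_mem hdn ht).2
    exact hcont.eventually_mem this
  have hMU : ∀ᶠ s in nhds (0:ℝ), γ s ∈ M ∩ c.U := hγM.and hU
  have hδ : HasDerivAt (fun s => c.ρ hdn (γ s)) (fderiv ℝ (c.ρ hdn) (c.τ hdn t) p) 0 := by
    have hd : HasFDerivAt (c.ρ hdn) (fderiv ℝ (c.ρ hdn) (c.τ hdn t)) (γ 0) := by
      rw [hγ0]; exact (c.diffAt_rho hdn (c.tau_mem hdn ht).2).hasFDerivAt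
    exact hd.comp_hasDerivAt 0 hγd
  have hδ0 : c.ρ hdn (γ 0) = t := by rw [hγ0]; exact c.rho_tau hdn ht
  have hcomp : HasDerivAt (fun s => u (c.τ hdn (c.ρ hdn (γ s))))
      (fderiv ℝ (fun s => u (c.τ hdn s)) t (fderiv ℝ (c.ρ hdn) (c.τ hdn t) p)) 0 := by
    have hd : HasFDerivAt (fun s => u (c.τ hdn s)) (fderiv ℝ (fun s => u (c.τ hdn s)) t)
        (c.ρ hdn (γ 0)) := by
      rw [hδ0]; exact hu.hasFDerivAt
    exact hd.comp_hasDerivAt 0 hδ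
  have heq : (fun s => u (c.τ hdn (c.ρ hdn (γ s)))) =ᶠ[nhds (0:ℝ)] u ∘ γ := by
    filter_upwards [hMU] with s hs
    simp only [Function.comp_apply, c.tau_rho hdn hs]
  have : HasDerivAt (u ∘ γ) (fderiv ℝ (fun s => u (c.τ hdn s)) t
      (fderiv ℝ (c.ρ hdn) (c.τ hdn t) p)) 0 := hcomp.congr_of_eventuallyEq heq.symm
  exact hcc.unique this

/-- The forced value of a derivative field in a chart. -/
lemma derivField_eq {t : Fin d → ℝ} (ht : t ∈ c.W hdn) {u : (Fin n → ℝ) → ℝ} {j : Fin n}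
    {D : (Fin n → ℝ) → ℝ} (hD : IsDerivField n M u j D)
    (hu : DifferentiableAt ℝ (fun s => u (c.τ hdn s)) t) :
    D (c.τ hdn t) = fderiv ℝ (fun s => u (c.τ hdn s)) t (c.cvec hdn t j) := by
  obtain ⟨γ, hγ0, hγM, hγd, hcc⟩ :=
    hD (c.τ hdn t) (c.tau_mem hdn ht).1 _ (c.isOrthProj_pvec hdn ht j)
  have h1 := c.deriv_along_eq hdn ht u hu hγ0 hγM hγd hcc
  rw [h1]
  congr 1
  exact c.rho_tau_fderiv hdn ht _

/-- Gradient identity: partial derivatives in the chart as combinations of the fields `D_j`. -/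
lemma grad_eq {t : Fin d → ℝ} (ht : t ∈ c.W hdn) {u : (Fin n → ℝ) → ℝ}
    {D1 : Fin n → (Fin n → ℝ) → ℝ} (hD1 : ∀ j, IsDerivField n M u j (D1 j))
    (hu : DifferentiableAt ℝ (fun s => u (c.τ hdn s)) t) (l : Fin d) :
    fderiv ℝ (fun s => u (c.τ hdn s)) t (Pi.single l 1)
      = ∑ j : Fin n, c.Amat hdn t j l * D1 j (c.τ hdn t) := by
  conv_lhs => rw [c.single_eq_sum_cvec hdn ht l, map_sum]
  refine Finset.sum_congr rfl fun j _ => ?_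
  rw [_root_.map_smul, smul_eq_mul, c.derivField_eq hdn ht (hD1 j) hu]

end Chart

end
noncomputable section

open Matrix

variable {n d : ℕ}

namespace Chart

variable {M : Set (Fin n → ℝ)} (c : Chart n d M) (hdn : d ≤ n)

lemma fderiv_comp_tau_differentiableAt {u : (Fin n → ℝ) → ℝ}
    (hC2 : ∀ s ∈ c.W hdn, ContDiffAt ℝ 2 (fun s' => u (c.τ hdn s')) s)
    {t : Fin d → ℝ} (ht : t ∈ c.W hdn) :
    DifferentiableAt ℝ (fderiv ℝ (fun s' => u (c.τ hdn s'))) t := by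
  have hCD : ContDiffOn ℝ 2 (fun s' => u (c.τ hdn s')) (c.W hdn) :=
    fun s hs => (hC2 s hs).contDiffWithinAt
  have h1 : ContDiffOn ℝ 1 (fderiv ℝ (fun s' => u (c.τ hdn s'))) (c.W hdn) :=
    hCD.fderiv_of_isOpen (c.openW hdn) (by norm_num)
  exact (h1.differentiableOn one_ne_zero).differentiableAt ((c.openW hdn).mem_nhds ht)

/-- Second-order identity: second chart partials of `u` in terms of the fields `D1`, `D2`. -/
lemma second_partial_eq {u : (Fin n → ℝ) → ℝ} {D1 : Fin n → (Fin n → ℝ) → ℝ}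
    {D2 : Fin n → Fin n → (Fin n → ℝ) → ℝ}
    (hC2 : ∀ s ∈ c.W hdn, ContDiffAt ℝ 2 (fun s' => u (c.τ hdn s')) s)
    (hD1 : ∀ j, IsDerivField n M u j (D1 j))
    (hD2 : ∀ j1 j2, IsDerivField n M (D1 j2) j1 (D2 j1 j2))
    {t : Fin d → ℝ} (ht : t ∈ c.W hdn) (k l : Fin d) :
    fderiv ℝ (fun s => fderiv ℝ (fun s' => u (c.τ hdn s')) s (Pi.single l 1)) t (Pi.single k 1)
      = ∑ j : Fin n, (fderiv ℝ (fun s => c.Amat hdn s j l) t (Pi.single k 1) * D1 j (c.τ hdn t)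
          + c.Amat hdn t j l * ∑ m : Fin n, c.Amat hdn t m k * D2 m j (c.τ hdn t)) := by
  set uτ := fun s' => u (c.τ hdn s') with huτ
  have hdiffW : ∀ s ∈ c.W hdn, DifferentiableAt ℝ uτ s :=
    fun s hs => (hC2 s hs).differentiableAt two_ne_zero
  -- the functions X j
  set X : Fin n → (Fin d → ℝ) → ℝ := fun j s => fderiv ℝ uτ s (c.cvec hdn s j) with hX
  have hXdiff : ∀ j, DifferentiableAt ℝ (X j) t := fun j =>
    (c.fderiv_comp_tau_differentiableAt hdn hC2 ht).clm_apply (c.cvec_differentiableAt hdn ht j)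
  have hXeq : ∀ j, ∀ s ∈ c.W hdn, D1 j (c.τ hdn s) = X j s := fun j s hs =>
    c.derivField_eq hdn hs (hD1 j) (hdiffW s hs)
  -- forced values of D2
  have hD2eq : ∀ j m, D2 m j (c.τ hdn t) = fderiv ℝ (X j) t (c.cvec hdn t m) := by
    intro j m
    have hev : (fun s => D1 j (c.τ hdn s)) =ᶠ[nhds t] X j := by
      filter_upwards [(c.openW hdn).mem_nhds ht] with s hs
      exact hXeq j s hs
    have hdiff : DifferentiableAt ℝ (fun s => D1 j (c.τ hdn s)) t :=
      hev.differentiableAt_iff.mpr (hXdiff j)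
    have h1 := c.derivField_eq hdn ht (hD2 m j) hdiff
    rw [h1, hev.fderiv_eq]
  -- the gradient identity as functions near t
  have hφev : (fun s => fderiv ℝ uτ s (Pi.single l 1))
      =ᶠ[nhds t] fun s => ∑ j : Fin n, c.Amat hdn s j l * X j s := by
    filter_upwards [(c.openW hdn).mem_nhds ht] with s hs
    rw [c.grad_eq hdn hs hD1 (hdiffW s hs) l]
    exact Finset.sum_congr rfl fun j _ => by rw [hXeq j s hs]
  rw [hφev.fderiv_eq]
  have hdiffs : ∀ j ∈ Finset.univ (α := Fin n),
      DifferentiableAt ℝ (fun s => c.Amat hdn s j l * X j s) t :=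
    fun j _ => (c.Amat_differentiableAt hdn ht j l).mul (hXdiff j)
  rw [fderiv_fun_sum hdiffs]
  rw [ContinuousLinearMap.sum_apply]
  refine Finset.sum_congr rfl fun j _ => ?_
  rw [fderiv_fun_mul (c.Amat_differentiableAt hdn ht j l) (hXdiff j)]
  rw [ContinuousLinearMap.add_apply, ContinuousLinearMap.smul_apply,
    ContinuousLinearMap.smul_apply]
  have hfx : fderiv ℝ (X j) t (Pi.single k 1) = ∑ m : Fin n, c.Amat hdn t m k * D2 m j (c.τ hdn t) := by
    conv_lhs => rw [c.single_eq_sum_cvec hdn ht k, map_sum]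
    refine Finset.sum_congr rfl fun m _ => ?_
    rw [_root_.map_smul, smul_eq_mul, hD2eq j m]
  rw [hfx]
  have hXt : X j t = D1 j (c.τ hdn t) := (hXeq j t ht).symm
  rw [hXt]
  ring_nf

end Chart

end
noncomputable section

open Matrix

variable {n d : ℕ}

/-- `hessianEntry` via iterated partial derivatives, for functions locally `C^2`. -/
lemma hessianEntry_eq {u v : (Fin d → ℝ) → ℝ} {t : Fin d → ℝ} (huv : u =ᶠ[nhds t] v)
    (hv : ContDiffAt ℝ 2 v t) (i j : Fin d) :
    hessianEntry u t i j
      = fderiv ℝ (fun s => fderiv ℝ v s (Pi.single j 1)) t (Pi.single i 1) := by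
  have h0 : hessianEntry u t i j
      = fderiv ℝ (fderiv ℝ u) t (Pi.single i 1) (Pi.single j 1) := by
    rw [hessianEntry, iteratedFDeriv_two_apply]
    simp
  rw [h0]
  have h1 : fderiv ℝ u =ᶠ[nhds t] fderiv ℝ v := huv.fderiv
  rw [h1.fderiv_eq]
  have hdv : DifferentiableAt ℝ (fderiv ℝ v) t :=
    (hv.fderiv_right (m := 1) (by norm_num)).differentiableAt one_ne_zero
  rw [fderiv_clm_apply hdv (differentiableAt_const (Pi.single j 1))]
  simp

/-- Chain rule for second derivatives at a critical point. -/
lemma hess_chain {θ : (Fin d → ℝ) → (Fin d → ℝ)} {G : (Fin d → ℝ) → ℝ} {t' : Fin d → ℝ}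
    (hG : ContDiffAt ℝ 2 G (θ t')) (hθ : ContDiffAt ℝ 2 θ t')
    (hcrit : ∀ l, fderiv ℝ G (θ t') (Pi.single l 1) = 0) (i j : Fin d) :
    fderiv ℝ (fun s => fderiv ℝ (fun s' => G (θ s')) s (Pi.single j 1)) t' (Pi.single i 1)
      = ∑ l, ∑ k, fderiv ℝ θ t' (Pi.single i 1) k * fderiv ℝ θ t' (Pi.single j 1) l *
          fderiv ℝ (fun y => fderiv ℝ G y (Pi.single l 1)) (θ t') (Pi.single k 1) := by
  have hGd : ∀ᶠ y in nhds (θ t'), DifferentiableAt ℝ G y := by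
    filter_upwards [hG.eventually (by norm_num)] with y hy
    exact hy.differentiableAt two_ne_zero
  have hθd : ∀ᶠ s in nhds t', DifferentiableAt ℝ θ s := by
    filter_upwards [hθ.eventually (by norm_num)] with s hs
    exact hs.differentiableAt two_ne_zero
  have hθc : ContinuousAt θ t' := hθ.continuousAt
  have hcomb : ∀ᶠ s in nhds t', DifferentiableAt ℝ G (θ s) ∧ DifferentiableAt ℝ θ s :=
    (hθc.eventually hGd).and hθd
  have hev : (fun s => fderiv ℝ (fun s' => G (θ s')) s (Pi.single j 1))
      =ᶠ[nhds t'] fun s => ∑ l, fderiv ℝ θ s (Pi.single j 1) l *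
          fderiv ℝ G (θ s) (Pi.single l 1) := by
    filter_upwards [hcomb] with s hs
    have hcmp : fderiv ℝ (fun s' => G (θ s')) s = (fderiv ℝ G (θ s)).comp (fderiv ℝ θ s) :=
      fderiv_comp s hs.1 hs.2
    rw [hcmp, ContinuousLinearMap.comp_apply,
      clm_expand (fderiv ℝ G (θ s)) (fderiv ℝ θ s (Pi.single j 1))]
    exact Finset.sum_congr rfl fun l _ => by rw [smul_eq_mul]
  rw [hev.fderiv_eq]
  have hθfd : DifferentiableAt ℝ (fderiv ℝ θ) t' :=
    (hθ.fderiv_right (m := 1) (by norm_num)).differentiableAt one_ne_zero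
  have hGfd : DifferentiableAt ℝ (fderiv ℝ G) (θ t') :=
    (hG.fderiv_right (m := 1) (by norm_num)).differentiableAt one_ne_zero
  have ha : ∀ l : Fin d, DifferentiableAt ℝ (fun s => fderiv ℝ θ s (Pi.single j 1) l) t' :=
    fun l => (ContinuousLinearMap.proj (R := ℝ) (φ := fun _ : Fin d => ℝ) l)
      |>.differentiableAt.comp t' (hθfd.clm_apply (differentiableAt_const _))
  have hbout : ∀ l : Fin d, DifferentiableAt ℝ (fun y => fderiv ℝ G y (Pi.single l 1)) (θ t') :=
    fun l => hGfd.clm_apply (differentiableAt_const _)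
  have hb : ∀ l : Fin d, DifferentiableAt ℝ (fun s => fderiv ℝ G (θ s) (Pi.single l 1)) t' :=
    fun l => (hbout l).comp t' (hθ.differentiableAt two_ne_zero)
  rw [fderiv_fun_sum fun l _ => ((ha l).fun_mul (hb l))]
  rw [ContinuousLinearMap.sum_apply]
  refine Finset.sum_congr rfl fun l _ => ?_
  rw [fderiv_fun_mul (ha l) (hb l), ContinuousLinearMap.add_apply, ContinuousLinearMap.smul_apply,
    ContinuousLinearMap.smul_apply]
  have hzero : fderiv ℝ G (θ t') (Pi.single l 1) = 0 := hcrit l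
  rw [hzero]
  have hfb : fderiv ℝ (fun s => fderiv ℝ G (θ s) (Pi.single l 1)) t' (Pi.single i 1)
      = ∑ k, fderiv ℝ θ t' (Pi.single i 1) k *
          fderiv ℝ (fun y => fderiv ℝ G y (Pi.single l 1)) (θ t') (Pi.single k 1) := by
    have hcmp : fderiv ℝ (fun s => fderiv ℝ G (θ s) (Pi.single l 1)) t'
        = (fderiv ℝ (fun y => fderiv ℝ G y (Pi.single l 1)) (θ t')).comp (fderiv ℝ θ t') :=
      fderiv_comp t' (hbout l) (hθ.differentiableAt two_ne_zero)
    rw [hcmp, ContinuousLinearMap.comp_apply,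
      clm_expand (fderiv ℝ (fun y => fderiv ℝ G y (Pi.single l 1)) (θ t'))
        (fderiv ℝ θ t' (Pi.single i 1))]
    exact Finset.sum_congr rfl fun k _ => by rw [smul_eq_mul]
  rw [hfb]
  simp only [smul_eq_mul, zero_mul, mul_zero, zero_smul, add_zero, zero_add]
  rw [Finset.mul_sum]
  exact Finset.sum_congr rfl fun k _ => by ring

namespace Chart

variable {M : Set (Fin n → ℝ)} (c : Chart n d M) (hdn : d ≤ n)

lemma isCriticalPt_of_grad_zero {t : Fin d → ℝ} (ht : t ∈ c.W hdn) {f : (Fin n → ℝ) → ℝ}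
    (hfd : DifferentiableAt ℝ (fun s => f (c.τ hdn s)) t)
    (hgrad : ∀ l, fderiv ℝ (fun s => f (c.τ hdn s)) t (Pi.single l 1) = 0) :
    IsCriticalPt n M f (c.τ hdn t) := by
  refine ⟨(c.tau_mem hdn ht).1, fun γ v hγ0 hγM hγd => ?_⟩
  have hcont : ContinuousAt γ 0 := hγd.continuousAt
  have hU : ∀ᶠ s in nhds (0:ℝ), γ s ∈ c.U := by
    have : c.U ∈ nhds (γ 0) := by rw [hγ0]; exact c.openU.mem_nhds (c.tau_mem hdn ht).2
    exact hcont.eventually_mem this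
  have hMU : ∀ᶠ s in nhds (0:ℝ), γ s ∈ M ∩ c.U := hγM.and hU
  have hδ : HasDerivAt (fun s => c.ρ hdn (γ s)) (fderiv ℝ (c.ρ hdn) (c.τ hdn t) v) 0 := by
    have hd : HasFDerivAt (c.ρ hdn) (fderiv ℝ (c.ρ hdn) (c.τ hdn t)) (γ 0) := by
      rw [hγ0]; exact (c.diffAt_rho hdn (c.tau_mem hdn ht).2).hasFDerivAt
    exact hd.comp_hasDerivAt 0 hγd
  have hδ0 : c.ρ hdn (γ 0) = t := by rw [hγ0]; exact c.rho_tau hdn ht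
  have hval : fderiv ℝ (fun s => f (c.τ hdn s)) t (fderiv ℝ (c.ρ hdn) (c.τ hdn t) v) = 0 := by
    rw [clm_expand]
    refine Finset.sum_eq_zero fun l _ => ?_
    rw [hgrad l, smul_zero]
  have hcomp : HasDerivAt (fun s => f (c.τ hdn (c.ρ hdn (γ s)))) 0 0 := by
    have hd : HasFDerivAt (fun s => f (c.τ hdn s)) (fderiv ℝ (fun s => f (c.τ hdn s)) t)
        (c.ρ hdn (γ 0)) := by
      rw [hδ0]; exact hfd.hasFDerivAt
    have := hd.comp_hasDerivAt 0 hδ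
    rwa [hval] at this
  have heq : (fun s => f (c.τ hdn (c.ρ hdn (γ s)))) =ᶠ[nhds (0:ℝ)] f ∘ γ := by
    filter_upwards [hMU] with s hs
    simp only [Function.comp_apply, c.tau_rho hdn hs]
  exact hcomp.congr_of_eventuallyEq heq.symm

lemma grad_zero_of_critical {x : Fin n → ℝ} (hx : x ∈ M ∩ c.U) {g : (Fin n → ℝ) → ℝ}
    (hgd : DifferentiableAt ℝ (fun s => g (c.τ hdn s)) (c.ρ hdn x))
    (hcrit : IsCriticalPt n M g x) (l : Fin d) :
    fderiv ℝ (fun s => g (c.τ hdn s)) (c.ρ hdn x) (Pi.single l 1) = 0 := by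
  set t := c.ρ hdn x with hts
  have ht : t ∈ c.W hdn := c.rho_mem_W hdn hx
  set γ : ℝ → Fin n → ℝ := fun s => c.τ hdn (t + s • (Pi.single l 1 : Fin d → ℝ)) with hγ
  have hγ0 : γ 0 = x := by
    simp only [hγ, zero_smul, add_zero]
    exact c.tau_rho hdn hx
  have hγM : ∀ᶠ s in nhds (0:ℝ), γ s ∈ M := by
    have hcont : ContinuousAt (fun s : ℝ => t + s • (Pi.single l 1 : Fin d → ℝ)) 0 :=
      (hasDerivAt_line t (Pi.single l 1)).continuousAt
    have hmem : ∀ᶠ s in nhds (0:ℝ), t + s • (Pi.single l 1 : Fin d → ℝ) ∈ c.W hdn := by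
      have : c.W hdn ∈ nhds (t + (0:ℝ) • (Pi.single l 1 : Fin d → ℝ)) := by
        simpa using (c.openW hdn).mem_nhds ht
      exact hcont.eventually_mem this
    filter_upwards [hmem] with s hs
    exact (c.tau_mem hdn hs).1
  have hγd : HasDerivAt γ (fderiv ℝ (c.τ hdn) t (Pi.single l 1)) 0 := by
    have hd : HasFDerivAt (c.τ hdn) (fderiv ℝ (c.τ hdn) t) (t + (0:ℝ) • (Pi.single l 1 : Fin d → ℝ)) := by
      simpa using (c.diffAt_tau hdn ht).hasFDerivAt
    exact hd.comp_hasDerivAt 0 (hasDerivAt_line t (Pi.single l 1))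
  have h0 := hcrit.2 γ _ hγ0 hγM hγd
  have h1 : HasDerivAt (g ∘ γ) (fderiv ℝ (fun s => g (c.τ hdn s)) t (Pi.single l 1)) 0 := by
    have hd : HasFDerivAt (fun s => g (c.τ hdn s)) (fderiv ℝ (fun s => g (c.τ hdn s)) t)
        (t + (0:ℝ) • (Pi.single l 1 : Fin d → ℝ)) := by
      simpa using hgd.hasFDerivAt
    exact hd.comp_hasDerivAt 0 (hasDerivAt_line t (Pi.single l 1))
  exact h1.unique h0

lemma localParam {x : Fin n → ℝ} (hx : x ∈ M ∩ c.U) :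
    IsLocalParamAt n d M (c.τ hdn) (c.W hdn) (c.ρ hdn x) x := by
  refine ⟨c.openW hdn, c.rho_mem_W hdn hx, c.tau_rho hdn hx, c.contDiffOn_tau hdn,
    fun a ha b hb hab => ?_, c.U, c.openU, hx.2, ?_⟩
  · rw [← c.rho_tau hdn ha, hab, c.rho_tau hdn hb]
  · ext y
    constructor
    · rintro ⟨s, hs, rfl⟩
      exact c.tau_mem hdn hs
    · intro hy
      exact ⟨c.ρ hdn y, c.rho_mem_W hdn hy, c.tau_rho hdn hy⟩

/-- Transfer of nondegeneracy from an arbitrary parametrization to the chart. -/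
lemma det_hess_ne_of_nondeg {f : (Fin n → ℝ) → ℝ} (hf : CrOn 2 M f) {x : Fin n → ℝ}
    (hx : x ∈ M ∩ c.U)
    (hgrad : ∀ l, fderiv ℝ (fun s => f (c.τ hdn s)) (c.ρ hdn x) (Pi.single l 1) = 0)
    (hnd : IsNondegCritPt n d M f x) :
    (Matrix.of fun k l => fderiv ℝ (fun s => fderiv ℝ (fun s' => f (c.τ hdn s')) s
        (Pi.single l 1)) (c.ρ hdn x) (Pi.single k 1)).det ≠ 0 := by
  obtain ⟨-, τ', W', t0', ⟨hW'o, ht0', hτ't0, hτ'CD, hτ'inj, U', hU'o, hxU', himg⟩, hdet⟩ := hnd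
  set t := c.ρ hdn x with hts
  have ht : t ∈ c.W hdn := c.rho_mem_W hdn hx
  set θ : (Fin d → ℝ) → Fin d → ℝ := fun s => c.ρ hdn (τ' s) with hθdef
  have hθt0 : θ t0' = t := by rw [hθdef]; simp only [hτ't0, hts]
  have hτ'M : ∀ s ∈ W', τ' s ∈ M := by
    intro s hs
    have : τ' s ∈ τ' '' W' := ⟨s, hs, rfl⟩
    rw [himg] at this
    exact this.1
  have hθCD : ContDiffAt ℝ 2 θ t0' := by
    have h1 : ContDiffAt ℝ 2 (c.ρ hdn) (τ' t0') := by
      rw [hτ't0]; exact c.contDiffAt_rho hdn hx.2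
    exact h1.comp t0' (hτ'CD.contDiffAt (hW'o.mem_nhds ht0'))
  set F : (Fin d → ℝ) → ℝ := fun s => f (c.τ hdn s) with hFdef
  have hF : ContDiffAt ℝ 2 F (θ t0') := by
    rw [hθt0]; exact c.contDiffAt_comp_tau hdn hf ht
  have hFθ : ContDiffAt ℝ 2 (fun s => F (θ s)) t0' := hF.comp t0' hθCD
  have hτ'c : ContinuousOn τ' W' := hτ'CD.continuousOn
  have hOopen : IsOpen (W' ∩ τ' ⁻¹' c.U) := hτ'c.isOpen_inter_preimage hW'o c.openU
  have ht0'O : t0' ∈ W' ∩ τ' ⁻¹' c.U := ⟨ht0', by rw [Set.mem_preimage, hτ't0]; exact hx.2⟩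
  have hcompev : (f ∘ τ') =ᶠ[nhds t0'] fun s => F (θ s) := by
    filter_upwards [hOopen.mem_nhds ht0'O] with s hs
    have hmem : τ' s ∈ M ∩ c.U := ⟨hτ'M s hs.1, hs.2⟩
    simp only [Function.comp_apply, hFdef, hθdef, c.tau_rho hdn hmem]
  have hcrit' : ∀ l, fderiv ℝ F (θ t0') (Pi.single l 1) = 0 := by
    intro l; rw [hθt0]; exact hgrad l
  have hconv : ∀ i j, hessianEntry (f ∘ τ') t0' i j
      = ∑ l, ∑ k, fderiv ℝ θ t0' (Pi.single i 1) k * fderiv ℝ θ t0' (Pi.single j 1) l *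
          fderiv ℝ (fun y => fderiv ℝ F y (Pi.single l 1)) (θ t0') (Pi.single k 1) := by
    intro i j
    rw [hessianEntry_eq hcompev hFθ i j]
    exact hess_chain hF hθCD hcrit' i j
  set B : Matrix (Fin d) (Fin d) ℝ := fun k i => fderiv ℝ θ t0' (Pi.single i 1) k with hBdef
  set H : Matrix (Fin d) (Fin d) ℝ := Matrix.of fun k l =>
    fderiv ℝ (fun s => fderiv ℝ (fun s' => f (c.τ hdn s')) s (Pi.single l 1)) t
      (Pi.single k 1) with hHdef
  have hmat : (Matrix.of fun i j => hessianEntry (f ∘ τ') t0' i j) = Bᵀ * H * B := by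
    ext i j
    rw [Matrix.of_apply, hconv i j]
    have hrhs : (Bᵀ * H * B) i j = ∑ x, ∑ y, B y i * H y x * B x j := by
      rw [Matrix.mul_apply]
      refine Finset.sum_congr rfl fun x _ => ?_
      rw [Matrix.mul_apply, Finset.sum_mul]
      refine Finset.sum_congr rfl fun y _ => ?_
      rw [Matrix.transpose_apply]
    rw [hrhs]
    refine Finset.sum_congr rfl fun x _ => Finset.sum_congr rfl fun y _ => ?_
    have hH : H y x = fderiv ℝ (fun w => fderiv ℝ F w (Pi.single x 1)) (θ t0')
        (Pi.single y 1) := by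
      simp only [hHdef, Matrix.of_apply, hθt0, hFdef]
    rw [hH]
    ring
  intro h0
  apply hdet
  rw [hmat, Matrix.det_mul, Matrix.det_mul, h0]
  ring

end Chart

end
noncomputable section

open Matrix

variable {n d : ℕ}

lemma compact_zero_set {α : Type*} [TopologicalSpace α] {K : Set α} (hK : IsCompact K)
    {Φ : α → ℝ} (hΦ : ContinuousOn Φ K) : IsCompact {p ∈ K | Φ p = 0} := by
  have h1 : {p ∈ K | Φ p = 0} = Subtype.val '' {q : K | Φ (q : α) = 0} := by
    ext p
    constructor
    · rintro ⟨hpK, hp0⟩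
      exact ⟨⟨p, hpK⟩, hp0, rfl⟩
    · rintro ⟨q, hq0, rfl⟩
      exact ⟨q.2, hq0⟩
  have hcs : CompactSpace K := isCompact_iff_compactSpace.mp hK
  have hc : Continuous fun q : K => Φ (q : α) := continuousOn_iff_continuous_restrict.mp hΦ
  have hcl : IsClosed {q : K | Φ (q : α) = 0} := isClosed_eq hc continuous_const
  rw [h1]
  exact hcl.isCompact.image continuous_subtype_val

lemma fderiv_apply_contDiffOn {u : (Fin d → ℝ) → ℝ} {W : Set (Fin d → ℝ)} (hW : IsOpen W)
    (hu : ContDiffOn ℝ 2 u W) (v : Fin d → ℝ) :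
    ContDiffOn ℝ 1 (fun t => fderiv ℝ u t v) W := by
  have h1 : ContDiffOn ℝ 1 (fderiv ℝ u) W := hu.fderiv_of_isOpen hW (by norm_num)
  exact (ContinuousLinearMap.apply ℝ ℝ v).contDiff.comp_contDiffOn h1

lemma hess_continuousOn {u : (Fin d → ℝ) → ℝ} {W : Set (Fin d → ℝ)} (hW : IsOpen W)
    (hu : ContDiffOn ℝ 2 u W) (k l : Fin d) :
    ContinuousOn (fun t => fderiv ℝ (fun s => fderiv ℝ u s (Pi.single l 1)) t (Pi.single k 1))
      W := by
  have h2 := fderiv_apply_contDiffOn hW hu (Pi.single l 1)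
  have h3 : ContinuousOn (fderiv ℝ (fun s => fderiv ℝ u s (Pi.single l 1))) W :=
    h2.continuousOn_fderiv_of_isOpen hW le_rfl
  exact (ContinuousLinearMap.apply ℝ ℝ (Pi.single k 1)).continuous.comp_continuousOn h3

namespace Chart

variable {M : Set (Fin n → ℝ)} (c : Chart n d M) (hdn : d ≤ n)

lemma contDiffOn_comp_tau {f : (Fin n → ℝ) → ℝ} (hf : CrOn 2 M f) :
    ContDiffOn ℝ 2 (fun s => f (c.τ hdn s)) (c.W hdn) :=
  fun s hs => (c.contDiffAt_comp_tau hdn hf hs).contDiffWithinAt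

lemma Amat_contDiffOn1 (j : Fin n) (l : Fin d) :
    ContDiffOn ℝ 1 (fun s => c.Amat hdn s j l) (c.W hdn) := by
  have h1 : ContDiffOn ℝ 1 (fderiv ℝ (c.τ hdn)) (c.W hdn) :=
    (c.contDiffOn_tau hdn).fderiv_of_isOpen (c.openW hdn) (by norm_num)
  have h2 : ContDiffOn ℝ 1 (fun s => fderiv ℝ (c.τ hdn) s (Pi.single l 1)) (c.W hdn) := by
    have := (ContinuousLinearMap.apply ℝ (Fin n → ℝ)
      ((Pi.single l 1 : Fin d → ℝ))).contDiff.comp_contDiffOn h1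
    exact this.congr fun s _ => rfl
  have h3 := (ContinuousLinearMap.proj (R := ℝ) (φ := fun _ : Fin n => ℝ)
    j).contDiff.comp_contDiffOn h2
  exact h3.congr fun s _ => rfl

lemma SD_continuousOn (j : Fin n) (l k : Fin d) :
    ContinuousOn (fun t => fderiv ℝ (fun s => c.Amat hdn s j l) t (Pi.single k 1))
      (c.W hdn) := by
  have h3 : ContinuousOn (fderiv ℝ (fun s => c.Amat hdn s j l)) (c.W hdn) :=
    (c.Amat_contDiffOn1 hdn j l).continuousOn_fderiv_of_isOpen (c.openW hdn) le_rfl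
  exact (ContinuousLinearMap.apply ℝ ℝ (Pi.single k 1)).continuous.comp_continuousOn h3

include hdn in
/-- Stability of nondegeneracy over a compact piece contained in a single chart. -/
lemma chartStable {f : (Fin n → ℝ) → ℝ} (hf : CrOn 2 M f) {K : Set (Fin n → ℝ)}
    (hK : IsCompact K) (hKMU : K ⊆ M ∩ c.U)
    (hMorse : ∀ x ∈ K, IsCriticalPt n M f x → IsNondegCritPt n d M f x) :
    ∃ ε > (0:ℝ), ∀ g : (Fin n → ℝ) → ℝ, CrOn 2 M g → InC2Ball n M f g ε →
      ∀ x ∈ K, IsCriticalPt n M g x → IsNondegCritPt n d M g x := by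
  rcases Set.eq_empty_or_nonempty K with hKe | hKne
  · exact ⟨1, one_pos, fun g _ _ x hx => by rw [hKe] at hx; exact absurd hx (Set.notMem_empty x)⟩
  set W := c.W hdn with hWdef
  have hWo : IsOpen W := c.openW hdn
  set F : (Fin d → ℝ) → ℝ := fun s => f (c.τ hdn s) with hFdef
  have hFC2 : ContDiffOn ℝ 2 F W := c.contDiffOn_comp_tau hdn hf
  have hρcont : ContinuousOn (c.ρ hdn) c.U := fun y hy =>
    (c.contDiffAt_rho hdn hy).continuousAt.continuousWithinAt
  set Q : Set (Fin d → ℝ) := c.ρ hdn '' K with hQdef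
  have hQcpt : IsCompact Q := hK.image_of_continuousOn (hρcont.mono fun y hy => (hKMU hy).2)
  have hQW : Q ⊆ W := by
    rintro t ⟨y, hy, rfl⟩
    exact c.rho_mem_W hdn (hKMU hy)
  have hQne : Q.Nonempty := hKne.image _
  have hτQK : ∀ t ∈ Q, c.τ hdn t ∈ K := by
    rintro t ⟨y, hy, rfl⟩
    rw [c.tau_rho hdn (hKMU hy)]
    exact hy
  -- Hessian of F as a matrix-valued map, and the gradient-norm function
  set HF : (Fin d → ℝ) → (Fin d → Fin d → ℝ) := fun t k l =>
    fderiv ℝ (fun s => fderiv ℝ F s (Pi.single l 1)) t (Pi.single k 1) with hHFdef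
  have hHFcont : ContinuousOn HF W := by
    rw [continuousOn_pi]
    intro k
    rw [continuousOn_pi]
    intro l
    exact hess_continuousOn hWo hFC2 k l
  set gn : (Fin d → ℝ) → ℝ := fun t => ∑ l, |fderiv ℝ F t (Pi.single l 1)| with hgndef
  have hgncont : ContinuousOn gn W :=
    continuousOn_finset_sum _ fun l _ => ((fderiv_apply_contDiffOn hWo hFC2 _).continuousOn).abs
  have hgnnn : ∀ t, 0 ≤ gn t := fun t => Finset.sum_nonneg fun l _ => abs_nonneg _
  -- bound functions
  set aB : (Fin d → ℝ) → ℝ := fun t => ∑ l, ∑ j, |c.Amat hdn t j l| with haBdef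
  have haBcont : ContinuousOn aB W :=
    continuousOn_finset_sum _ fun l _ => continuousOn_finset_sum _ fun j _ =>
      ((c.Amat_contDiffOn1 hdn j l).continuousOn).abs
  set bB : (Fin d → ℝ) → ℝ := fun t => ∑ k, ∑ l,
    ((∑ j, |fderiv ℝ (fun s => c.Amat hdn s j l) t (Pi.single k 1)|)
      + (∑ j, |c.Amat hdn t j l|) * (∑ m, |c.Amat hdn t m k|)) with hbBdef
  have hbBcont : ContinuousOn bB W := by
    refine continuousOn_finset_sum _ fun k _ => continuousOn_finset_sum _ fun l _ =>
      ContinuousOn.add ?_ (ContinuousOn.mul ?_ ?_)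
    · exact continuousOn_finset_sum _ fun j _ => (c.SD_continuousOn hdn j l k).abs
    · exact continuousOn_finset_sum _ fun j _ => ((c.Amat_contDiffOn1 hdn j l).continuousOn).abs
    · exact continuousOn_finset_sum _ fun m _ => ((c.Amat_contDiffOn1 hdn m k).continuousOn).abs
  -- sup bounds on Q
  obtain ⟨ta, htaQ, hta⟩ := hQcpt.exists_isMaxOn hQne (haBcont.mono hQW)
  obtain ⟨tb, htbQ, htb⟩ := hQcpt.exists_isMaxOn hQne (hbBcont.mono hQW)
  set Ca := aB ta with hCadef
  set Cb := bB tb with hCbdef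
  have hCa : ∀ t ∈ Q, aB t ≤ Ca := fun t ht => hta ht
  have hCb : ∀ t ∈ Q, bB t ≤ Cb := fun t ht => htb ht
  have hCa0 : 0 ≤ Ca := Finset.sum_nonneg fun l _ => Finset.sum_nonneg fun j _ => abs_nonneg _
  have hCb0 : 0 ≤ Cb := Finset.sum_nonneg fun k _ => Finset.sum_nonneg fun l _ =>
    add_nonneg (Finset.sum_nonneg fun j _ => abs_nonneg _)
      (mul_nonneg (Finset.sum_nonneg fun j _ => abs_nonneg _)
        (Finset.sum_nonneg fun m _ => abs_nonneg _))
  -- nondegeneracy at chart-critical points of f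
  have hZdet : ∀ t ∈ Q, gn t = 0 → (Matrix.of (HF t)).det ≠ 0 := by
    intro t htQ hgn0
    have htW : t ∈ W := hQW htQ
    have hgrad0 : ∀ l, fderiv ℝ F t (Pi.single l 1) = 0 := by
      intro l
      have h1 : |fderiv ℝ F t (Pi.single l 1)| = 0 := by
        have := (Finset.sum_eq_zero_iff_of_nonneg fun l' (_ : l' ∈ Finset.univ) =>
          abs_nonneg (fderiv ℝ F t (Pi.single l' 1))).mp hgn0 l (Finset.mem_univ l)
        exact this
      exact abs_eq_zero.mp h1
    have hFd : DifferentiableAt ℝ F t :=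
      ((hFC2 t htW).contDiffAt (hWo.mem_nhds htW)).differentiableAt two_ne_zero
    have hcritf : IsCriticalPt n M f (c.τ hdn t) :=
      c.isCriticalPt_of_grad_zero hdn htW hFd hgrad0
    have hnd := hMorse _ (hτQK t htQ) hcritf
    have hx' : c.τ hdn t ∈ M ∩ c.U := c.tau_mem hdn htW
    have hgrad' : ∀ l, fderiv ℝ (fun s => f (c.τ hdn s)) (c.ρ hdn (c.τ hdn t))
        (Pi.single l 1) = 0 := by
      intro l
      rw [c.rho_tau hdn htW]
      exact hgrad0 l
    have hdet := c.det_hess_ne_of_nondeg hdn hf hx' hgrad' hnd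
    rw [c.rho_tau hdn htW] at hdet
    intro h0
    exact hdet h0
  -- the compact set of bad pairs
  set KK : Set ((Fin d → ℝ) × (Fin d → Fin d → ℝ)) :=
    Q ×ˢ Metric.closedBall (0 : Fin d → Fin d → ℝ) 1 with hKKdef
  have hKKcpt : IsCompact KK := hQcpt.prod (isCompact_closedBall _ _)
  set Φ : ((Fin d → ℝ) × (Fin d → Fin d → ℝ)) → ℝ :=
    fun p => (Matrix.of (HF p.1 + p.2)).det with hΦdef
  have hΦcont : ContinuousOn Φ KK := by
    have hdetc : Continuous fun A : Matrix (Fin d) (Fin d) ℝ => A.det :=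
      continuous_id.matrix_det
    have h1 : ContinuousOn (fun p : (Fin d → ℝ) × (Fin d → Fin d → ℝ) => HF p.1 + p.2) KK := by
      refine ContinuousOn.add ?_ continuous_snd.continuousOn
      exact (hHFcont.mono hQW).comp continuous_fst.continuousOn fun p hp => hp.1
    exact hdetc.comp_continuousOn h1
  set BAD := {p ∈ KK | Φ p = 0} with hBADdef
  have hBADcpt : IsCompact BAD := compact_zero_set hKKcpt hΦcont
  set Ψ : ((Fin d → ℝ) × (Fin d → Fin d → ℝ)) → ℝ := fun p => gn p.1 + ‖p.2‖ with hΨdef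
  have hΨcont : ContinuousOn Ψ BAD := by
    refine ContinuousOn.add ?_ continuous_snd.norm.continuousOn
    exact (hgncont.mono hQW).comp continuous_fst.continuousOn fun p hp => hp.1.1
  have hΨpos : ∀ p ∈ BAD, 0 < Ψ p := by
    rintro ⟨t, E⟩ ⟨⟨htQ, _⟩, h0⟩
    by_contra hle
    push_neg at hle
    have h1 : (0:ℝ) ≤ ‖E‖ := norm_nonneg E
    have h2 : 0 ≤ gn t := hgnnn t
    have hgn0 : gn t = 0 := by
      have : gn t + ‖E‖ ≤ 0 := hle
      linarith
    have hE0 : E = 0 := by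
      have : ‖E‖ = 0 := by
        have : gn t + ‖E‖ ≤ 0 := hle
        linarith
      exact norm_eq_zero.mp this
    apply hZdet t htQ hgn0
    have : HF t + E = HF t := by rw [hE0, add_zero]
    rw [← this]
    exact h0
  obtain ⟨μ, hμ0, hμ⟩ : ∃ μ > (0:ℝ), ∀ p ∈ BAD, μ ≤ Ψ p := by
    rcases Set.eq_empty_or_nonempty BAD with hBe | hBne
    · exact ⟨1, one_pos, fun p hp => by rw [hBe] at hp; exact absurd hp (Set.notMem_empty p)⟩
    · obtain ⟨p0, hp0, hmin⟩ := hBADcpt.exists_isMinOn hBne hΨcont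
      exact ⟨Ψ p0, hΨpos p0 hp0, fun p hp => hmin hp⟩
  set ε := min (μ / (2 * (Ca + 1))) (min (μ / (2 * (Cb + 1))) (1 / (Cb + 1))) with hεdef
  have hε0 : 0 < ε := by
    have h1 : 0 < μ / (2 * (Ca + 1)) := div_pos hμ0 (by nlinarith)
    have h2 : 0 < μ / (2 * (Cb + 1)) := div_pos hμ0 (by nlinarith)
    have h3 : 0 < 1 / (Cb + 1) := div_pos one_pos (by nlinarith)
    rw [hεdef, lt_min_iff, lt_min_iff]
    exact ⟨h1, h2, h3⟩
  have hεa : Ca * ε < μ / 2 := by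
    have h1 : ε ≤ μ / (2 * (Ca + 1)) := min_le_left _ _
    have h2 : Ca * ε ≤ Ca * (μ / (2 * (Ca + 1))) := mul_le_mul_of_nonneg_left h1 hCa0
    have h3 : Ca * (μ / (2 * (Ca + 1))) < μ / 2 := by
      rw [mul_div_assoc', div_lt_div_iff₀ (by nlinarith) (by norm_num)]
      nlinarith
    linarith
  have hεble : ε ≤ μ / (2 * (Cb + 1)) := le_trans (min_le_right _ _) (min_le_left _ _)
  have hεb : Cb * ε < μ / 2 := by
    have h2 : Cb * ε ≤ Cb * (μ / (2 * (Cb + 1))) := mul_le_mul_of_nonneg_left hεble hCb0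
    have h3 : Cb * (μ / (2 * (Cb + 1))) < μ / 2 := by
      rw [mul_div_assoc', div_lt_div_iff₀ (by nlinarith) (by norm_num)]
      nlinarith
    linarith
  have hεb1 : Cb * ε ≤ 1 := by
    have h1 : ε ≤ 1 / (Cb + 1) := le_trans (min_le_right _ _) (min_le_right _ _)
    have h2 : Cb * ε ≤ Cb * (1 / (Cb + 1)) := mul_le_mul_of_nonneg_left h1 hCb0
    have h3 : Cb * (1 / (Cb + 1)) ≤ 1 := by
      rw [mul_div_assoc', div_le_one (by nlinarith)]
      nlinarith
    linarith
  refine ⟨ε, hε0, ?_⟩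
  intro g hg hball x hxK hcrit
  have hx : x ∈ M ∩ c.U := hKMU hxK
  set t0 := c.ρ hdn x with ht0def
  have ht0Q : t0 ∈ Q := ⟨x, hxK, rfl⟩
  have ht0W : t0 ∈ W := hQW ht0Q
  have hτt0 : c.τ hdn t0 = x := c.tau_rho hdn hx
  set G2 : (Fin d → ℝ) → ℝ := fun s => g (c.τ hdn s) with hG2def
  have hGC2 : ContDiffOn ℝ 2 G2 W := c.contDiffOn_comp_tau hdn hg
  set u : (Fin n → ℝ) → ℝ := fun y => g y - f y with hudef
  set uτ : (Fin d → ℝ) → ℝ := fun s => u (c.τ hdn s) with huτdef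
  have huτC2at : ∀ s ∈ W, ContDiffAt ℝ 2 (fun s' => u (c.τ hdn s')) s := fun s hs =>
    (c.contDiffAt_comp_tau hdn hg hs).sub (c.contDiffAt_comp_tau hdn hf hs)
  have huτC2 : ContDiffOn ℝ 2 uτ W := fun s hs => (huτC2at s hs).contDiffWithinAt
  obtain ⟨hbound0, D1, D2, hD1, hD2, hD1b, hD2b⟩ := hball
  have hD1bx : ∀ j, |D1 j (c.τ hdn t0)| ≤ ε := fun j =>
    le_of_lt (hD1b j (c.τ hdn t0) (c.tau_mem hdn ht0W).1)
  have hD2bx : ∀ j1 j2, |D2 j1 j2 (c.τ hdn t0)| ≤ ε := fun j1 j2 =>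
    le_of_lt (hD2b j1 j2 (c.τ hdn t0) (c.tau_mem hdn ht0W).1)
  have hG2d : ∀ s ∈ W, DifferentiableAt ℝ G2 s := fun s hs =>
    ((hGC2 s hs).contDiffAt (hWo.mem_nhds hs)).differentiableAt two_ne_zero
  have hFd : ∀ s ∈ W, DifferentiableAt ℝ F s := fun s hs =>
    ((hFC2 s hs).contDiffAt (hWo.mem_nhds hs)).differentiableAt two_ne_zero
  have huτd : ∀ s ∈ W, DifferentiableAt ℝ uτ s := fun s hs =>
    ((huτC2 s hs).contDiffAt (hWo.mem_nhds hs)).differentiableAt two_ne_zero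
  -- gradient of G2 vanishes at t0
  have hgradG : ∀ l, fderiv ℝ G2 t0 (Pi.single l 1) = 0 := fun l =>
    c.grad_zero_of_critical hdn hx (hG2d t0 ht0W) hcrit l
  -- split the derivative
  have hsplit : ∀ s ∈ W, fderiv ℝ G2 s = fderiv ℝ F s + fderiv ℝ uτ s := by
    intro s hs
    have hfun : G2 = fun s' => F s' + uτ s' := by
      funext s'
      simp only [hG2def, hFdef, huτdef, hudef]
      ring
    rw [hfun]
    exact fderiv_add (hFd s hs) (huτd s hs)
  have hgradF : ∀ l, fderiv ℝ F t0 (Pi.single l 1) = -(fderiv ℝ uτ t0 (Pi.single l 1)) := by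
    intro l
    have h1 := hsplit t0 ht0W
    have h2 : fderiv ℝ G2 t0 (Pi.single l 1)
        = fderiv ℝ F t0 (Pi.single l 1) + fderiv ℝ uτ t0 (Pi.single l 1) := by
      rw [h1]; rfl
    rw [hgradG l] at h2
    linarith [h2]
  -- gradient bound
  have hgradub : ∀ l, |fderiv ℝ uτ t0 (Pi.single l 1)| ≤ (∑ j, |c.Amat hdn t0 j l|) * ε := by
    intro l
    rw [c.grad_eq hdn ht0W hD1 (huτd t0 ht0W) l]
    calc |∑ j, c.Amat hdn t0 j l * D1 j (c.τ hdn t0)|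
        ≤ ∑ j, |c.Amat hdn t0 j l * D1 j (c.τ hdn t0)| := Finset.abs_sum_le_sum_abs _ _
      _ ≤ ∑ j, |c.Amat hdn t0 j l| * ε := by
          refine Finset.sum_le_sum fun j _ => ?_
          rw [abs_mul]
          exact mul_le_mul_of_nonneg_left (hD1bx j) (abs_nonneg _)
      _ = (∑ j, |c.Amat hdn t0 j l|) * ε := by rw [Finset.sum_mul]
  have hgnb : gn t0 < μ / 2 := by
    have h1 : gn t0 ≤ aB t0 * ε := by
      rw [hgndef, haBdef]
      calc (∑ l, |fderiv ℝ F t0 (Pi.single l 1)|)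
          = ∑ l, |fderiv ℝ uτ t0 (Pi.single l 1)| := by
            refine Finset.sum_congr rfl fun l _ => ?_
            rw [hgradF l, abs_neg]
        _ ≤ ∑ l, (∑ j, |c.Amat hdn t0 j l|) * ε :=
            Finset.sum_le_sum fun l _ => hgradub l
        _ = (∑ l, ∑ j, |c.Amat hdn t0 j l|) * ε := by rw [Finset.sum_mul]
    have h2 : aB t0 * ε ≤ Ca * ε := mul_le_mul_of_nonneg_right (hCa t0 ht0Q) hε0.le
    calc gn t0 ≤ aB t0 * ε := h1
      _ ≤ Ca * ε := h2
      _ < μ / 2 := hεa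
  -- Hessian bound for the difference
  set Eu : Fin d → Fin d → ℝ := fun k l =>
    fderiv ℝ (fun s => fderiv ℝ uτ s (Pi.single l 1)) t0 (Pi.single k 1) with hEudef
  have hEub : ∀ k l, |Eu k l| ≤ Cb * ε := by
    intro k l
    have hsp := c.second_partial_eq hdn huτC2at hD1 hD2 ht0W k l
    have h1 : |Eu k l| ≤ ∑ j, (|fderiv ℝ (fun s => c.Amat hdn s j l) t0 (Pi.single k 1)| * ε
        + |c.Amat hdn t0 j l| * ((∑ m, |c.Amat hdn t0 m k|) * ε)) := by
      rw [hEudef]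
      simp only []
      rw [hsp]
      calc |∑ j, (fderiv ℝ (fun s => c.Amat hdn s j l) t0 (Pi.single k 1) * D1 j (c.τ hdn t0)
              + c.Amat hdn t0 j l * ∑ m, c.Amat hdn t0 m k * D2 m j (c.τ hdn t0))|
          ≤ ∑ j, |fderiv ℝ (fun s => c.Amat hdn s j l) t0 (Pi.single k 1) * D1 j (c.τ hdn t0)
              + c.Amat hdn t0 j l * ∑ m, c.Amat hdn t0 m k * D2 m j (c.τ hdn t0)| :=
            Finset.abs_sum_le_sum_abs _ _
        _ ≤ ∑ j, (|fderiv ℝ (fun s => c.Amat hdn s j l) t0 (Pi.single k 1)| * ε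
              + |c.Amat hdn t0 j l| * ((∑ m, |c.Amat hdn t0 m k|) * ε)) := by
            refine Finset.sum_le_sum fun j _ => ?_
            refine le_trans (abs_add_le _ _) ?_
            refine add_le_add ?_ ?_
            · rw [abs_mul]
              exact mul_le_mul_of_nonneg_left (hD1bx j) (abs_nonneg _)
            · rw [abs_mul]
              refine mul_le_mul_of_nonneg_left ?_ (abs_nonneg _)
              calc |∑ m, c.Amat hdn t0 m k * D2 m j (c.τ hdn t0)|
                  ≤ ∑ m, |c.Amat hdn t0 m k * D2 m j (c.τ hdn t0)| :=
                    Finset.abs_sum_le_sum_abs _ _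
                _ ≤ ∑ m, |c.Amat hdn t0 m k| * ε := by
                    refine Finset.sum_le_sum fun m _ => ?_
                    rw [abs_mul]
                    exact mul_le_mul_of_nonneg_left (hD2bx m j) (abs_nonneg _)
                _ = (∑ m, |c.Amat hdn t0 m k|) * ε := by rw [Finset.sum_mul]
    have h2 : ∑ j, (|fderiv ℝ (fun s => c.Amat hdn s j l) t0 (Pi.single k 1)| * ε
        + |c.Amat hdn t0 j l| * ((∑ m, |c.Amat hdn t0 m k|) * ε))
        = ((∑ j, |fderiv ℝ (fun s => c.Amat hdn s j l) t0 (Pi.single k 1)|)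
            + (∑ j, |c.Amat hdn t0 j l|) * (∑ m, |c.Amat hdn t0 m k|)) * ε := by
      rw [Finset.sum_add_distrib, ← Finset.sum_mul, ← Finset.sum_mul, add_mul]
      ring
    have h3 : (∑ j, |fderiv ℝ (fun s => c.Amat hdn s j l) t0 (Pi.single k 1)|)
        + (∑ j, |c.Amat hdn t0 j l|) * (∑ m, |c.Amat hdn t0 m k|) ≤ bB t0 := by
      set term : Fin d → Fin d → ℝ := fun k' l' =>
        (∑ j, |fderiv ℝ (fun s => c.Amat hdn s j l') t0 (Pi.single k' 1)|)
          + (∑ j, |c.Amat hdn t0 j l'|) * (∑ m, |c.Amat hdn t0 m k'|) with htermdef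
      have htermnn : ∀ k' l', 0 ≤ term k' l' := fun k' l' =>
        add_nonneg (Finset.sum_nonneg fun j _ => abs_nonneg _)
          (mul_nonneg (Finset.sum_nonneg fun j _ => abs_nonneg _)
            (Finset.sum_nonneg fun m _ => abs_nonneg _))
      have hstep1 : term k l ≤ ∑ l', term k l' :=
        Finset.single_le_sum (fun l' _ => htermnn k l') (Finset.mem_univ l)
      have hstep2 : (∑ l', term k l') ≤ ∑ k', ∑ l', term k' l' :=
        Finset.single_le_sum (fun k' _ => Finset.sum_nonneg fun l' _ => htermnn k' l')
          (Finset.mem_univ k)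
      calc term k l ≤ ∑ l', term k l' := hstep1
        _ ≤ ∑ k', ∑ l', term k' l' := hstep2
        _ = bB t0 := rfl
    calc |Eu k l| ≤ _ := h1
      _ = ((∑ j, |fderiv ℝ (fun s => c.Amat hdn s j l) t0 (Pi.single k 1)|)
            + (∑ j, |c.Amat hdn t0 j l|) * (∑ m, |c.Amat hdn t0 m k|)) * ε := h2
      _ ≤ bB t0 * ε := mul_le_mul_of_nonneg_right h3 hε0.le
      _ ≤ Cb * ε := mul_le_mul_of_nonneg_right (hCb t0 ht0Q) hε0.le
  have hEunorm : ‖Eu‖ ≤ Cb * ε := by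
    rw [pi_norm_le_iff_of_nonneg (mul_nonneg hCb0 hε0.le)]
    intro k
    rw [pi_norm_le_iff_of_nonneg (mul_nonneg hCb0 hε0.le)]
    intro l
    rw [Real.norm_eq_abs]
    exact hEub k l
  have hEu1 : ‖Eu‖ ≤ 1 := le_trans hEunorm hεb1
  have hEuμ : ‖Eu‖ < μ / 2 := lt_of_le_of_lt hEunorm hεb
  have hHsplit : ∀ k l, fderiv ℝ (fun s => fderiv ℝ G2 s (Pi.single l 1)) t0 (Pi.single k 1)
      = HF t0 k l + Eu k l := by
    intro k l
    have hev : (fun s => fderiv ℝ G2 s (Pi.single l 1))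
        =ᶠ[nhds t0] fun s => fderiv ℝ F s (Pi.single l 1) + fderiv ℝ uτ s (Pi.single l 1) := by
      filter_upwards [hWo.mem_nhds ht0W] with s hs
      rw [hsplit s hs, ContinuousLinearMap.add_apply]
    rw [hev.fderiv_eq]
    have hdF : DifferentiableAt ℝ (fun s => fderiv ℝ F s (Pi.single l 1)) t0 :=
      ((fderiv_apply_contDiffOn hWo hFC2 (Pi.single l 1)).differentiableOn
        one_ne_zero).differentiableAt (hWo.mem_nhds ht0W)
    have hdu : DifferentiableAt ℝ (fun s => fderiv ℝ uτ s (Pi.single l 1)) t0 :=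
      ((fderiv_apply_contDiffOn hWo huτC2 (Pi.single l 1)).differentiableOn
        one_ne_zero).differentiableAt (hWo.mem_nhds ht0W)
    rw [fderiv_fun_add hdF hdu, ContinuousLinearMap.add_apply]
  have hdetG : (Matrix.of fun k l =>
      fderiv ℝ (fun s => fderiv ℝ G2 s (Pi.single l 1)) t0 (Pi.single k 1)).det ≠ 0 := by
    intro h0
    have heqm : (Matrix.of fun k l =>
        fderiv ℝ (fun s => fderiv ℝ G2 s (Pi.single l 1)) t0 (Pi.single k 1))
        = Matrix.of (HF t0 + Eu) := by
      ext k l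
      rw [Matrix.of_apply, Matrix.of_apply, hHsplit k l]
      rfl
    have hmem : (t0, Eu) ∈ BAD := by
      refine ⟨⟨ht0Q, ?_⟩, ?_⟩
      · rw [Metric.mem_closedBall, dist_zero_right]
        exact hEu1
      · show (Matrix.of (HF t0 + Eu)).det = 0
        rw [← heqm]
        exact h0
    have hcon := hμ _ hmem
    have hΨval : Ψ (t0, Eu) = gn t0 + ‖Eu‖ := rfl
    rw [hΨval] at hcon
    linarith
  refine ⟨hcrit, c.τ hdn, W, t0, c.localParam hdn hx, ?_⟩
  have hent : ∀ i j : Fin d, hessianEntry (g ∘ c.τ hdn) t0 i j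
      = fderiv ℝ (fun s => fderiv ℝ G2 s (Pi.single j 1)) t0 (Pi.single i 1) := by
    intro i j
    exact hessianEntry_eq (Filter.Eventually.of_forall fun s => rfl)
      ((hGC2 t0 ht0W).contDiffAt (hWo.mem_nhds ht0W)) i j
  have hmm : (Matrix.of fun i j : Fin d => hessianEntry (g ∘ c.τ hdn) t0 i j)
      = Matrix.of fun k l =>
        fderiv ℝ (fun s => fderiv ℝ G2 s (Pi.single l 1)) t0 (Pi.single k 1) := by
    ext i j
    rw [Matrix.of_apply, Matrix.of_apply, hent i j]
  rw [hmm]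
  exact hdetG

end Chart

end
noncomputable section

open Matrix

variable {n d : ℕ}

lemma inC2Ball_mono {M : Set (Fin n → ℝ)} {f g : (Fin n → ℝ) → ℝ} {ε ε' : ℝ} (h : ε ≤ ε')
    (hb : InC2Ball n M f g ε) : InC2Ball n M f g ε' := by
  obtain ⟨h0, D1, D2, h1, h2, h3, h4⟩ := hb
  exact ⟨fun x hx => lt_of_lt_of_le (h0 x hx) h, D1, D2, h1, h2,
    fun j x hx => lt_of_lt_of_le (h3 j x hx) h,
    fun j1 j2 x hx => lt_of_lt_of_le (h4 j1 j2 x hx) h⟩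

lemma inC2Ball_self {M : Set (Fin n → ℝ)} (hM : IsCrSubmanifold 2 n d M) (hdn : d ≤ n)
    (f : (Fin n → ℝ) → ℝ) {ε : ℝ} (hε : 0 < ε) : InC2Ball n M f f ε := by
  have hcurve : ∀ (j : Fin n) (x : Fin n → ℝ), x ∈ M → ∀ p : Fin n → ℝ,
      IsOrthProjOnto (TangentAt n M x) (Pi.single j 1) p →
      ∃ γ : ℝ → Fin n → ℝ, γ 0 = x ∧ (∀ᶠ s in nhds (0:ℝ), γ s ∈ M) ∧ HasDerivAt γ p 0 := by
    intro j x hxM p hp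
    obtain ⟨c, hcU⟩ := exists_chart hM hxM
    have hx : x ∈ M ∩ c.U := ⟨hxM, hcU⟩
    have ht : c.ρ hdn x ∈ c.W hdn := c.rho_mem_W hdn hx
    have hτt : c.τ hdn (c.ρ hdn x) = x := c.tau_rho hdn hx
    have hproj := c.isOrthProj_pvec hdn ht j
    rw [hτt] at hproj
    have hpq : p = c.pvec hdn (c.ρ hdn x) j := isOrthProjOnto_unique hp hproj
    obtain ⟨γ, hγ0, hγM, hγd⟩ := c.curve_mem_curveDerivs hdn ht (c.cvec hdn (c.ρ hdn x) j)
    refine ⟨γ, by rw [hγ0, hτt], hγM, ?_⟩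
    rw [hpq]
    exact hγd
  refine ⟨fun x hx => by simpa using hε, fun _ _ => 0, fun _ _ _ => 0, ?_, ?_,
    fun j x hx => by simpa using hε, fun j1 j2 x hx => by simpa using hε⟩
  · intro j x hxM p hp
    obtain ⟨γ, hγ0, hγM, hγd⟩ := hcurve j x hxM p hp
    refine ⟨γ, hγ0, hγM, hγd, ?_⟩
    have hzero : ((fun y => f y - f y) ∘ γ) = fun _ => (0:ℝ) := by funext s; simp
    rw [hzero]
    exact hasDerivAt_const 0 0
  · intro j1 j2 x hxM p hp
    obtain ⟨γ, hγ0, hγM, hγd⟩ := hcurve j1 x hxM p hp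
    refine ⟨γ, hγ0, hγM, hγd, ?_⟩
    exact hasDerivAt_const 0 0

end
theorem statement1 (L : FirstOrder.Language) [L.Structure ℝ]
    (hfield : ExpandsRealOrderedField L) (hdmin : DMinimal L)
    (n d : ℕ) (M C U : Set (Fin n → ℝ)) (σ : Fin d → Fin n) (hσ : StrictMono σ)
    (hM : IsDefCrSubmanifold L 2 n d M) (hMcpt : IsCompact M)
    (hCM : C ⊆ M) (hCcpt : IsCompact C) (hCdef : Def L n C)
    (hCU : C ⊆ U) (hUM : U ⊆ M) (hU : IsMVGraph L 2 n d σ U) :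
    @IsOpen _ (C2Topology L n M)
      {f : {f : (Fin n → ℝ) → ℝ // DefC2Fun L n M f} |
        ∀ x ∈ C, IsCriticalPt n M f.1 x → IsNondegCritPt n d M f.1 x} := by
  classical
  have hdn : d ≤ n := by
    have := Fintype.card_le_of_injective σ hσ.injective
    simpa using this
  have hMsub : IsCrSubmanifold 2 n d M := hM.2
  set T : Set {f : (Fin n → ℝ) → ℝ // DefC2Fun L n M f} :=
    {f | ∀ x ∈ C, IsCriticalPt n M f.1 x → IsNondegCritPt n d M f.1 x} with hTdef
  have key : ∀ f ∈ T, ∃ ε > (0:ℝ),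
      ({g : {f : (Fin n → ℝ) → ℝ // DefC2Fun L n M f} | InC2Ball n M f.1 g.1 ε} ⊆ T)
        ∧ InC2Ball n M f.1 f.1 ε := by
    intro f hfT
    -- choose a chart and radius around each point of `C`
    have hch : ∀ x : C, ∃ c : Chart n d M, (x : Fin n → ℝ) ∈ c.U :=
      fun x => exists_chart hMsub (hCM x.2)
    choose ch hch using hch
    have hrad : ∀ x : C, ∃ r > (0:ℝ), Metric.closedBall (x : Fin n → ℝ) r ⊆ (ch x).U := by
      intro x
      obtain ⟨δ, hδ0, hδ⟩ := Metric.isOpen_iff.mp (ch x).openU _ (hch x)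
      exact ⟨δ/2, by linarith,
        (Metric.closedBall_subset_ball (by linarith)).trans hδ⟩
    choose r hr0 hrsub using hrad
    have hcover : C ⊆ ⋃ i : C, Metric.ball (i : Fin n → ℝ) (r i) := fun y hy =>
      Set.mem_iUnion.mpr ⟨⟨y, hy⟩, Metric.mem_ball_self (hr0 ⟨y, hy⟩)⟩
    obtain ⟨t, ht⟩ := hCcpt.elim_finite_subcover (fun i : C => Metric.ball (i : Fin n → ℝ) (r i))
      (fun i => Metric.isOpen_ball) hcover
    set K : C → Set (Fin n → ℝ) := fun i => C ∩ Metric.closedBall (i : Fin n → ℝ) (r i)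
      with hKdef
    have hKcpt : ∀ i, IsCompact (K i) := fun i =>
      hCcpt.inter_right Metric.isClosed_closedBall
    have hKMU : ∀ i, K i ⊆ M ∩ (ch i).U := fun i y hy => ⟨hCM hy.1, hrsub i hy.2⟩
    have hstab : ∀ i : C, ∃ ε > (0:ℝ), ∀ g : (Fin n → ℝ) → ℝ, CrOn 2 M g →
        InC2Ball n M f.1 g ε → ∀ x ∈ K i, IsCriticalPt n M g x → IsNondegCritPt n d M g x :=
      fun i => (ch i).chartStable hdn f.2.2 (hKcpt i) (hKMU i)
        (fun x hx hc => hfT x hx.1 hc)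
    choose εf hεf0 hεfP using hstab
    set ε := if hne : t.Nonempty then t.inf' hne εf else 1 with hεdef
    have hε0 : 0 < ε := by
      rw [hεdef]
      split
      · next hne => exact (Finset.lt_inf'_iff hne).mpr fun i _ => hεf0 i
      · exact one_pos
    refine ⟨ε, hε0, ?_, inC2Ball_self hMsub hdn f.1 hε0⟩
    intro g hg x hxC hcritx
    have hxball := ht hxC
    rw [Set.mem_iUnion₂] at hxball
    obtain ⟨i, hit, hxb⟩ := hxball
    have hne : t.Nonempty := ⟨i, hit⟩
    have hεle : ε ≤ εf i := by
      rw [hεdef, dif_pos hne]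
      exact Finset.inf'_le εf hit
    have hg' : InC2Ball n M f.1 g.1 (εf i) := inC2Ball_mono hεle hg
    have hxK : x ∈ K i := ⟨hxC, Metric.ball_subset_closedBall hxb⟩
    exact hεfP i g.1 g.2.2 hg' x hxK hcritx
  set 𝒮 : Set (Set {f : (Fin n → ℝ) → ℝ // DefC2Fun L n M f}) :=
    {S | (∃ (h : {f : (Fin n → ℝ) → ℝ // DefC2Fun L n M f}) (ε : ℝ), 0 < ε ∧
      S = {g | InC2Ball n M h.1 g.1 ε}) ∧ S ⊆ T} with h𝒮def
  have hTeq : T = ⋃₀ 𝒮 := by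
    ext f
    constructor
    · intro hfT
      obtain ⟨ε, hε0, hsub, hself⟩ := key f hfT
      exact ⟨{g | InC2Ball n M f.1 g.1 ε}, ⟨⟨f, ε, hε0, rfl⟩, hsub⟩, hself⟩
    · rintro ⟨S, ⟨-, hsub⟩, hfS⟩
      exact hsub hfS
  show (C2Topology L n M).IsOpen T
  rw [hTeq]
  exact TopologicalSpace.GenerateOpen.sUnion _ fun S hS =>
    TopologicalSpace.GenerateOpen.basic S hS.1
end DMorse
end

section
/- Let π : ℝ^n → ℝ^d be the projection onto the first d coordinates, let U be a definable C^2 multi-valued graph with respect to π (definable in a d-minimal expansion of the real ordered field), and let f : U → ℝ be a definable C^2 function. Consider the definable C^1 map H : U → ℝ^d given by H(x) = (∂f/∂x_1(x),…,∂f/∂x_d(x)), the partial derivatives being taken with respect to the local coordinates x_1,…,x_d on U. Then for every (a_1,…,a_d) ∈ ℝ^d that is not a critical value of H, the function Φ : U → ℝ, Φ(x_1,…,x_n) = f(x_1,…,x_n) − Σ_{i=1}^d a_i x_i, is a Morse function on U; since the set of critical values of H has empty interior in ℝ^d, for every ε > 0 one can choose such (a_1,…,a_d) with |a_i| < ε for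 all i. -/
open FirstOrder Filter Topology

namespace DMorse

lemma isOpen_openBox {n : ℕ} (a b : Fin n → ℝ) : IsOpen (openBox a b) := by
  have : openBox a b = ⋂ i, ((fun y : Fin n → ℝ => y i) ⁻¹' Set.Ioi (a i) ∩
      (fun y : Fin n → ℝ => y i) ⁻¹' Set.Iio (b i)) := by
    ext y; simp [openBox]
  rw [this]
  exact isOpen_iInter_of_finite fun i =>
    ((isOpen_Ioi.preimage (continuous_apply i)).inter (isOpen_Iio.preimage (continuous_apply i)))

lemma coordProj_image_box {n d : ℕ} (hd : d ≤ n) (a b x : Fin n → ℝ) (hx : x ∈ openBox a b) :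
    coordProj (Fin.castLE hd) '' openBox a b =
      openBox (fun i => a (Fin.castLE hd i)) (fun i => b (Fin.castLE hd i)) := by
  ext y
  constructor
  · rintro ⟨z, hz, rfl⟩ i
    exact hz (Fin.castLE hd i)
  · intro hy
    refine ⟨fun j => if h : (j : ℕ) < d then y ⟨j, h⟩ else x j, fun j => ?_, ?_⟩
    · by_cases h : (j : ℕ) < d
      · have hj : Fin.castLE hd ⟨(j : ℕ), h⟩ = j := Fin.ext rfl
        have h2 := hy ⟨(j : ℕ), h⟩
        simp only [hj] at h2
        simpa [h] using h2
      · simpa [h] using hx j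
    · funext i
      have h : ((Fin.castLE hd i : Fin n) : ℕ) < d := i.isLt
      simp only [coordProj]
      rw [dif_pos h]
      congr 1

noncomputable def evalCLM (d : ℕ) : ((Fin d → ℝ) →L[ℝ] ℝ) →L[ℝ] (Fin d → ℝ) :=
  ContinuousLinearMap.pi fun i => ContinuousLinearMap.apply ℝ ℝ (Pi.single i 1)

noncomputable def projCLM {n d : ℕ} (hd : d ≤ n) : (Fin n → ℝ) →L[ℝ] (Fin d → ℝ) :=
  ContinuousLinearMap.pi fun i => ContinuousLinearMap.proj (Fin.castLE hd i)

lemma projCLM_apply {n d : ℕ} (hd : d ≤ n) (x : Fin n → ℝ) :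
    projCLM hd x = coordProj (Fin.castLE hd) x := rfl

noncomputable def gradMap (d : ℕ) (g : (Fin d → ℝ) → ℝ) (y : Fin d → ℝ) : Fin d → ℝ :=
  fun i => fderiv ℝ g y (Pi.single i 1)

noncomputable def hessCLM (d : ℕ) (g : (Fin d → ℝ) → ℝ) (y : Fin d → ℝ) :
    (Fin d → ℝ) →L[ℝ] (Fin d → ℝ) :=
  (evalCLM d).comp (fderiv ℝ (fderiv ℝ g) y)

noncomputable def hessMat (d : ℕ) (g : (Fin d → ℝ) → ℝ) (y : Fin d → ℝ) :
    Matrix (Fin d) (Fin d) ℝ :=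
  Matrix.of fun i j => fderiv ℝ (fderiv ℝ g) y (Pi.single j 1) (Pi.single i 1)

lemma evalCLM_apply (d : ℕ) (L : (Fin d → ℝ) →L[ℝ] ℝ) :
    evalCLM d L = fun i => L (Pi.single i 1) := rfl

lemma hessCLM_apply (d : ℕ) (g : (Fin d → ℝ) → ℝ) (y : Fin d → ℝ) (u : Fin d → ℝ) :
    hessCLM d g y u = (hessMat d g y).mulVec u := by
  have hu : u = ∑ j, u j • (Pi.single j 1 : Fin d → ℝ) := by
    funext k; simp [Pi.single_apply]
  funext i
  simp only [hessCLM, ContinuousLinearMap.comp_apply]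
  rw [evalCLM_apply]
  conv_lhs => rw [hu]
  rw [map_sum]
  simp [Matrix.mulVec, dotProduct, hessMat, mul_comm]

lemma clm_det_surj {d : ℕ} (A : (Fin d → ℝ) →L[ℝ] (Fin d → ℝ)) (M : Matrix (Fin d) (Fin d) ℝ)
    (h : ∀ u, A u = M.mulVec u) :
    A.det = M.det ∧ (Function.Surjective A ↔ M.det ≠ 0) := by
  have hA : (A : (Fin d → ℝ) →ₗ[ℝ] (Fin d → ℝ)) = Matrix.toLin' M := by
    rw [Matrix.toLin'_apply']
    exact LinearMap.ext fun u => h u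
  constructor
  · show LinearMap.det _ = _
    rw [hA, LinearMap.det_toLin']
  · have hfun : ⇑A = M.mulVec := funext h
    rw [show Function.Surjective ⇑A ↔ Function.Surjective M.mulVec from by rw [hfun],
      Matrix.mulVec_surjective_iff_isUnit, Matrix.isUnit_iff_isUnit_det, isUnit_iff_ne_zero]

lemma gradMap_hasFDerivAt {d : ℕ} {g : (Fin d → ℝ) → ℝ} {y : Fin d → ℝ}
    (hg : ContDiffAt ℝ 2 g y) : HasFDerivAt (gradMap d g) (hessCLM d g y) y := by
  have h1 : DifferentiableAt ℝ (fderiv ℝ g) y :=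
    (hg.fderiv_right (m := 1) (by norm_num)).differentiableAt one_ne_zero
  have h3 := (evalCLM d).hasFDerivAt.comp y h1.hasFDerivAt
  exact h3

lemma chart_exists (L : FirstOrder.Language) [L.Structure ℝ] {n d : ℕ} (hd : d ≤ n)
    {U : Set (Fin n → ℝ)} {f : (Fin n → ℝ) → ℝ} {H : (Fin n → ℝ) → Fin d → ℝ}
    (hU2 : ∀ x ∈ U, MVGraphPointAt L 2 n d (Fin.castLE hd) U x)
    (hf : CrOn 2 U f)
    (hH : ∀ x ∈ U, ∀ a b : Fin n → ℝ, x ∈ openBox a b →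
      ∀ τ : (Fin d → ℝ) → Fin n → ℝ,
        CrOn 2 (coordProj (Fin.castLE hd) '' openBox a b) τ →
        U ∩ openBox a b = τ '' (coordProj (Fin.castLE hd) '' openBox a b) →
        (∀ y ∈ coordProj (Fin.castLE hd) '' openBox a b, coordProj (Fin.castLE hd) (τ y) = y) →
        ∀ i : Fin d,
          H x i = fderiv ℝ (f ∘ τ) (coordProj (Fin.castLE hd) x) (Pi.single i 1))
    {x : Fin n → ℝ} (hx : x ∈ U) :
    ∃ (B : Set (Fin n → ℝ)) (τ : (Fin d → ℝ) → Fin n → ℝ),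
      IsOpen B ∧ x ∈ B ∧ IsOpen (coordProj (Fin.castLE hd) '' B) ∧
      U ∩ B = τ '' (coordProj (Fin.castLE hd) '' B) ∧
      (∀ y ∈ coordProj (Fin.castLE hd) '' B,
        τ y ∈ U ∩ B ∧ coordProj (Fin.castLE hd) (τ y) = y ∧
        ContDiffAt ℝ 2 τ y ∧ ContDiffAt ℝ 2 (f ∘ τ) y) ∧
      (∀ x' ∈ U ∩ B, τ (coordProj (Fin.castLE hd) x') = x' ∧
        ∀ i, H x' i = fderiv ℝ (f ∘ τ) (coordProj (Fin.castLE hd) x') (Pi.single i 1)) := by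
  obtain ⟨a, b, hxab, τ, hτC, hτdef, hgraph, hsec⟩ := hU2 x hx
  have hOopen : IsOpen (coordProj (Fin.castLE hd) '' openBox a b) := by
    rw [coordProj_image_box hd a b x hxab]; exact isOpen_openBox _ _
  have hmem : ∀ y ∈ coordProj (Fin.castLE hd) '' openBox a b, τ y ∈ U ∩ openBox a b := by
    intro y hy; rw [hgraph]; exact ⟨y, hy, rfl⟩
  have hτCAt : ∀ y ∈ coordProj (Fin.castLE hd) '' openBox a b, ContDiffAt ℝ 2 τ y := by
    intro y hy
    obtain ⟨W, hWopen, hyW, g, hg, heq⟩ := hτC.2 (by norm_num) y hy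
    have hg' : ContDiffAt ℝ 2 g y := by
      have := hg.contDiffAt (hWopen.mem_nhds hyW)
      exact_mod_cast this
    exact hg'.congr_of_eventuallyEq <|
      Filter.eventuallyEq_of_mem ((hOopen.inter hWopen).mem_nhds ⟨hy, hyW⟩)
        fun z hz => (heq ⟨hz.1, hz.2⟩).symm
  have hfτ : ∀ y ∈ coordProj (Fin.castLE hd) '' openBox a b, ContDiffAt ℝ 2 (f ∘ τ) y := by
    intro y hy
    obtain ⟨V, hVopen, hτyV, g, hg, heq⟩ := hf.2 (by norm_num) (τ y) (hmem y hy).1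
    have hopen2 : IsOpen (coordProj (Fin.castLE hd) '' openBox a b ∩ τ ⁻¹' V) :=
      hτC.1.isOpen_inter_preimage hOopen hVopen
    have hgc : ContDiffAt ℝ 2 g (τ y) := by
      have := hg.contDiffAt (hVopen.mem_nhds hτyV)
      exact_mod_cast this
    have hgτ : ContDiffAt ℝ 2 (g ∘ τ) y := hgc.comp y (hτCAt y hy)
    exact hgτ.congr_of_eventuallyEq <|
      Filter.eventuallyEq_of_mem (hopen2.mem_nhds ⟨hy, hτyV⟩) fun z hz =>
        (heq ⟨(hmem z hz.1).1, hz.2⟩).symm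
  have hinv : ∀ x' ∈ U ∩ openBox a b, τ (coordProj (Fin.castLE hd) x') = x' := by
    intro x' hx'
    rw [hgraph] at hx'
    obtain ⟨y', hy', rfl⟩ := hx'
    rw [hsec y' hy']
  exact ⟨openBox a b, τ, isOpen_openBox a b, hxab, hOopen, hgraph,
    fun y hy => ⟨hmem y hy, hsec y hy, hτCAt y hy, hfτ y hy⟩,
    fun x' hx' => ⟨hinv x' hx', fun i => hH x' hx'.1 a b hx'.2 τ hτC hgraph hsec i⟩⟩

lemma diffImage_eq {n d : ℕ} (hd : d ≤ n) {U : Set (Fin n → ℝ)} {f : (Fin n → ℝ) → ℝ}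
    {H : (Fin n → ℝ) → Fin d → ℝ} {B : Set (Fin n → ℝ)} {τ : (Fin d → ℝ) → Fin n → ℝ}
    (hBopen : IsOpen B) (hOopen : IsOpen (coordProj (Fin.castLE hd) '' B))
    (hbundle : ∀ y ∈ coordProj (Fin.castLE hd) '' B,
        τ y ∈ U ∩ B ∧ coordProj (Fin.castLE hd) (τ y) = y ∧
        ContDiffAt ℝ 2 τ y ∧ ContDiffAt ℝ 2 (f ∘ τ) y)
    (hHval : ∀ x' ∈ U ∩ B, ∀ i,
        H x' i = fderiv ℝ (f ∘ τ) (coordProj (Fin.castLE hd) x') (Pi.single i 1))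
    {y : Fin d → ℝ} (hy : y ∈ coordProj (Fin.castLE hd) '' B) :
    diffImage n d U H (τ y) = LinearMap.range (hessCLM d (f ∘ τ) y : (Fin d → ℝ) →ₗ[ℝ] (Fin d → ℝ)) := by
  have hGd : ∀ z ∈ coordProj (Fin.castLE hd) '' B,
      HasFDerivAt (gradMap d (f ∘ τ)) (hessCLM d (f ∘ τ) z) z :=
    fun z hz => gradMap_hasFDerivAt (hbundle z hz).2.2.2
  have hHG : ∀ x' ∈ U ∩ B, H x' = gradMap d (f ∘ τ) (coordProj (Fin.castLE hd) x') :=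
    fun x' hx' => funext fun i => hHval x' hx' i
  apply le_antisymm
  · apply Submodule.span_le.2
    rintro w ⟨γ, v, hγ0, hγU, hγv, hw⟩
    have hxB : τ y ∈ B := (hbundle y hy).1.2
    have hevB : ∀ᶠ t in 𝓝 (0:ℝ), γ t ∈ B :=
      hγv.continuousAt.eventually_mem (hBopen.mem_nhds (by rw [hγ0]; exact hxB))
    have hevEq : (H ∘ γ) =ᶠ[𝓝 (0:ℝ)]
        (gradMap d (f ∘ τ) ∘ fun t => coordProj (Fin.castLE hd) (γ t)) :=
      (hγU.and hevB).mono fun t ht => hHG (γ t) ht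
    have hc : HasDerivAt (fun t => coordProj (Fin.castLE hd) (γ t))
        (coordProj (Fin.castLE hd) v) 0 := by
      have := (projCLM hd).hasFDerivAt.comp_hasDerivAt 0 hγv
      exact this
    have hc0 : coordProj (Fin.castLE hd) (γ 0) = y := by
      rw [hγ0]; exact (hbundle y hy).2.1
    have hGy : HasFDerivAt (gradMap d (f ∘ τ)) (hessCLM d (f ∘ τ) y)
        (coordProj (Fin.castLE hd) (γ 0)) := by
      rw [hc0]; exact hGd y hy
    have hGc : HasDerivAt (gradMap d (f ∘ τ) ∘ fun t => coordProj (Fin.castLE hd) (γ t))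
        (hessCLM d (f ∘ τ) y (coordProj (Fin.castLE hd) v)) 0 :=
      hGy.comp_hasDerivAt 0 hc
    have hw' : HasDerivAt (H ∘ γ)
        (hessCLM d (f ∘ τ) y (coordProj (Fin.castLE hd) v)) 0 :=
      hGc.congr_of_eventuallyEq hevEq
    have hweq : w = hessCLM d (f ∘ τ) y (coordProj (Fin.castLE hd) v) := hw.unique hw'
    rw [hweq]
    exact LinearMap.mem_range_self _ _
  · intro w hw
    obtain ⟨u, rfl⟩ := LinearMap.mem_range.1 hw
    apply Submodule.subset_span
    set c' : ℝ → Fin d → ℝ := fun t => y + t • u with hc'def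
    have hc'0 : c' 0 = y := by simp [hc'def]
    have hc'd : HasDerivAt c' u 0 := by
      simpa [hc'def] using ((hasDerivAt_id (0:ℝ)).smul_const u).const_add y
    have hevO : ∀ᶠ t in 𝓝 (0:ℝ), c' t ∈ coordProj (Fin.castLE hd) '' B := by
      have hm : coordProj (Fin.castLE hd) '' B ∈ 𝓝 (c' 0) := by
        rw [hc'0]; exact hOopen.mem_nhds hy
      exact hc'd.continuousAt.eventually_mem hm
    have hlτ : HasFDerivAt τ (fderiv ℝ τ y) (c' 0) := by
      rw [hc'0]
      exact (((hbundle y hy).2.2.1).differentiableAt (by norm_num)).hasFDerivAt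
    have hγd : HasDerivAt (fun t => τ (c' t)) (fderiv ℝ τ y u) 0 :=
      hlτ.comp_hasDerivAt 0 hc'd
    have hGl : HasFDerivAt (gradMap d (f ∘ τ)) (hessCLM d (f ∘ τ) y) (c' 0) := by
      rw [hc'0]; exact hGd y hy
    have hGc : HasDerivAt (gradMap d (f ∘ τ) ∘ c') (hessCLM d (f ∘ τ) y u) 0 :=
      hGl.comp_hasDerivAt 0 hc'd
    have hevEq : (H ∘ fun t => τ (c' t)) =ᶠ[𝓝 (0:ℝ)] (gradMap d (f ∘ τ) ∘ c') := by
      refine hevO.mono fun t ht => ?_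
      have h1 := hHG (τ (c' t)) (hbundle _ ht).1
      have h2 := (hbundle _ ht).2.1
      simp only [Function.comp_apply]
      rw [h1, h2]
    refine ⟨fun t => τ (c' t), fderiv ℝ τ y u, ?_, ?_, hγd, ?_⟩
    · show τ (c' 0) = τ y
      rw [hc'0]
    · exact hevO.mono fun t ht => (hbundle _ ht).1.1
    · exact hGc.congr_of_eventuallyEq hevEq

theorem statement6 (L : FirstOrder.Language) [L.Structure ℝ]
    (hfield : ExpandsRealOrderedField L) (hdmin : DMinimal L)
    (n d : ℕ) (hd : d ≤ n)
    (U : Set (Fin n → ℝ)) (hU : IsMVGraph L 2 n d (Fin.castLE hd) U)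
    (f : (Fin n → ℝ) → ℝ) (hfdef : DefFun L n U f) (hf : CrOn 2 U f)
    (H : (Fin n → ℝ) → Fin d → ℝ)
    (hH : ∀ x ∈ U, ∀ a b : Fin n → ℝ, x ∈ openBox a b →
      ∀ τ : (Fin d → ℝ) → Fin n → ℝ,
        CrOn 2 (coordProj (Fin.castLE hd) '' openBox a b) τ →
        U ∩ openBox a b = τ '' (coordProj (Fin.castLE hd) '' openBox a b) →
        (∀ y ∈ coordProj (Fin.castLE hd) '' openBox a b, coordProj (Fin.castLE hd) (τ y) = y) →
        ∀ i : Fin d,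
          H x i = fderiv ℝ (f ∘ τ) (coordProj (Fin.castLE hd) x) (Pi.single i 1)) :
    (∀ a : Fin d → ℝ, a ∉ criticalValues n d U H →
        IsMorseOn n d U fun x => f x - ∑ i : Fin d, a i * x (Fin.castLE hd i)) ∧
    ∀ ε > (0 : ℝ), ∃ a : Fin d → ℝ, (∀ i, |a i| < ε) ∧ a ∉ criticalValues n d U H := by
  classical
  constructor
  · -- Part 1 : Morse away from critical values
    intro a ha x hcrit
    obtain ⟨B, τ, hBopen, hxB, hOopen, hgraph, hbundle, hval⟩ :=
      chart_exists L hd hU.2 hf hH hcrit.1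
    set Φ : (Fin n → ℝ) → ℝ := fun x => f x - ∑ i : Fin d, a i * x (Fin.castLE hd i) with hΦdef
    set y0 := coordProj (Fin.castLE hd) x with hy0def
    have hxUB : x ∈ U ∩ B := ⟨hcrit.1, hxB⟩
    have hy0O : y0 ∈ coordProj (Fin.castLE hd) '' B := ⟨x, hxB, rfl⟩
    have hτy0 : τ y0 = x := (hval x hxUB).1
    set La : (Fin d → ℝ) →L[ℝ] ℝ :=
      ∑ i, a i • (ContinuousLinearMap.proj i : (Fin d → ℝ) →L[ℝ] ℝ) with hLadef
    have hLa : ∀ v, La v = ∑ i, a i * v i := by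
      intro v
      simp [hLadef, ContinuousLinearMap.sum_apply]
    have hΦτ : ∀ z ∈ coordProj (Fin.castLE hd) '' B, Φ (τ z) = (f ∘ τ) z - La z := by
      intro z hz
      have hzi : ∀ j, τ z (Fin.castLE hd j) = z j := fun j =>
        congrFun ((hbundle z hz).2.1) j
      simp [hΦdef, hLa, hzi]
    have hdiffτf : ∀ z ∈ coordProj (Fin.castLE hd) '' B, DifferentiableAt ℝ (f ∘ τ) z :=
      fun z hz => ((hbundle z hz).2.2.2).differentiableAt (by norm_num)
    have hev : ∀ z ∈ coordProj (Fin.castLE hd) '' B,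
        (Φ ∘ τ) =ᶠ[𝓝 z] fun w => (f ∘ τ) w - La w := by
      intro z hz
      exact Filter.eventuallyEq_of_mem (hOopen.mem_nhds hz) fun w hw => hΦτ w hw
    have hfderivΦτ : ∀ z ∈ coordProj (Fin.castLE hd) '' B,
        fderiv ℝ (Φ ∘ τ) z = fderiv ℝ (f ∘ τ) z - La := by
      intro z hz
      rw [(hev z hz).fderiv_eq]
      exact ((hdiffτf z hz).hasFDerivAt.sub La.hasFDerivAt).fderiv
    -- criticality gives gradient = a
    have hgrad : ∀ i, fderiv ℝ (f ∘ τ) y0 (Pi.single i 1) = a i := by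
      intro i
      set c' : ℝ → Fin d → ℝ := fun t => y0 + t • (Pi.single i 1 : Fin d → ℝ) with hc'def
      have hc'0 : c' 0 = y0 := by simp [hc'def]
      have hc'd : HasDerivAt c' (Pi.single i 1) 0 := by
        simpa [hc'def] using ((hasDerivAt_id (0:ℝ)).smul_const
          (Pi.single i 1 : Fin d → ℝ)).const_add y0
      have hevO : ∀ᶠ t in 𝓝 (0:ℝ), c' t ∈ coordProj (Fin.castLE hd) '' B := by
        have hm : coordProj (Fin.castLE hd) '' B ∈ 𝓝 (c' 0) := by
          rw [hc'0]; exact hOopen.mem_nhds hy0O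
        exact hc'd.continuousAt.eventually_mem hm
      have hγU : ∀ᶠ t in 𝓝 (0:ℝ), τ (c' t) ∈ U := hevO.mono fun t ht => (hbundle _ ht).1.1
      have hlτ : HasFDerivAt τ (fderiv ℝ τ y0) (c' 0) := by
        rw [hc'0]
        exact (((hbundle y0 hy0O).2.2.1).differentiableAt (by norm_num)).hasFDerivAt
      have hγd : HasDerivAt (fun t => τ (c' t)) (fderiv ℝ τ y0 (Pi.single i 1)) 0 :=
        hlτ.comp_hasDerivAt 0 hc'd
      have hγ0 : (fun t => τ (c' t)) 0 = x := by
        show τ (c' 0) = x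
        rw [hc'0, hτy0]
      have hΦd := hcrit.2 _ _ hγ0 hγU hγd
      have hΨ : HasFDerivAt (fun w => (f ∘ τ) w - La w)
          (fderiv ℝ (f ∘ τ) y0 - La) (c' 0) := by
        rw [hc'0]
        exact (hdiffτf y0 hy0O).hasFDerivAt.sub La.hasFDerivAt
      have hΨc : HasDerivAt ((fun w => (f ∘ τ) w - La w) ∘ c')
          ((fderiv ℝ (f ∘ τ) y0 - La) (Pi.single i 1)) 0 := hΨ.comp_hasDerivAt 0 hc'd
      have hevEq : (Φ ∘ fun t => τ (c' t)) =ᶠ[𝓝 (0:ℝ)]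
          ((fun w => (f ∘ τ) w - La w) ∘ c') := by
        refine hevO.mono fun t ht => ?_
        simpa using hΦτ (c' t) ht
      have h2 : HasDerivAt (Φ ∘ fun t => τ (c' t))
          ((fderiv ℝ (f ∘ τ) y0 - La) (Pi.single i 1)) 0 :=
        hΨc.congr_of_eventuallyEq hevEq
      have h3 := hΦd.unique h2
      have hLai : La (Pi.single i 1) = a i := by
        simp [hLa, Pi.single_apply]
      rw [ContinuousLinearMap.sub_apply, hLai] at h3
      linarith
    have hHx : H x = a := by
      funext i
      rw [(hval x hxUB).2 i, ← hy0def, hgrad i]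
    -- nondegeneracy from a not a critical value
    have htop : diffImage n d U H x = ⊤ := by
      by_contra hne
      exact ha ⟨x, ⟨hcrit.1, hne⟩, hHx⟩
    have hrange : LinearMap.range (hessCLM d (f ∘ τ) y0 : (Fin d → ℝ) →ₗ[ℝ] (Fin d → ℝ)) = ⊤ := by
      have heq := diffImage_eq hd hBopen hOopen hbundle (fun x' hx' => (hval x' hx').2) hy0O
      rw [hτy0, htop] at heq
      exact heq.symm
    have hsurj : Function.Surjective (hessCLM d (f ∘ τ) y0) := LinearMap.range_eq_top.1 hrange
    have hdet : (hessMat d (f ∘ τ) y0).det ≠ 0 :=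
      (clm_det_surj _ _ (hessCLM_apply d (f ∘ τ) y0)).2.1 hsurj
    refine ⟨hcrit, τ, coordProj (Fin.castLE hd) '' B, y0,
      ⟨hOopen, hy0O, hτy0, ?_, ?_, B, hBopen, hxB, hgraph.symm⟩, ?_⟩
    · exact fun z hz => ((hbundle z hz).2.2.1).contDiffWithinAt
    · intro z1 h1 z2 h2 he
      have hh := (hbundle z1 h1).2.1
      rw [he, (hbundle z2 h2).2.1] at hh
      exact hh.symm
    · have hfd2 : fderiv ℝ (fderiv ℝ (Φ ∘ τ)) y0 = fderiv ℝ (fderiv ℝ (f ∘ τ)) y0 := by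
        have h1 : fderiv ℝ (Φ ∘ τ) =ᶠ[𝓝 y0] fun z => fderiv ℝ (f ∘ τ) z - La :=
          Filter.eventuallyEq_of_mem (hOopen.mem_nhds hy0O) fun z hz => hfderivΦτ z hz
        rw [h1.fderiv_eq]
        exact fderiv_sub_const _
      have hhe : (Matrix.of fun i j : Fin d => hessianEntry (Φ ∘ τ) y0 i j) =
          (hessMat d (f ∘ τ) y0).transpose := by
        ext i j
        simp only [Matrix.of_apply, Matrix.transpose_apply, hessianEntry,
          iteratedFDeriv_two_apply, hessMat]
        rw [hfd2]
        simp
      rw [hhe, Matrix.det_transpose]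
      exact hdet
  · -- Part 2 : small noncritical values exist
    intro ε hε
    by_contra hcon
    push_neg at hcon
    have hch : ∀ x : {z // z ∈ U}, ∃ (B : Set (Fin n → ℝ)) (τ : (Fin d → ℝ) → Fin n → ℝ),
        IsOpen B ∧ (x : Fin n → ℝ) ∈ B ∧ IsOpen (coordProj (Fin.castLE hd) '' B) ∧
        U ∩ B = τ '' (coordProj (Fin.castLE hd) '' B) ∧
        (∀ y ∈ coordProj (Fin.castLE hd) '' B,
          τ y ∈ U ∩ B ∧ coordProj (Fin.castLE hd) (τ y) = y ∧
          ContDiffAt ℝ 2 τ y ∧ ContDiffAt ℝ 2 (f ∘ τ) y) ∧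
        (∀ x' ∈ U ∩ B, τ (coordProj (Fin.castLE hd) x') = x' ∧
          ∀ i, H x' i = fderiv ℝ (f ∘ τ) (coordProj (Fin.castLE hd) x') (Pi.single i 1)) :=
      fun x => chart_exists L hd hU.2 hf hH x.2
    choose B τ hBopen hxB hOopen hgraph hbundle hval using hch
    obtain ⟨T, hTc, hTeq⟩ := TopologicalSpace.isOpen_iUnion_countable B hBopen
    set E : {z // z ∈ U} → Set (Fin d → ℝ) := fun i =>
      gradMap d (f ∘ τ i) ''
        {y ∈ coordProj (Fin.castLE hd) '' B i | (hessMat d (f ∘ τ i) y).det = 0} with hEdef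
    have hE0 : ∀ i, MeasureTheory.volume (E i) = 0 := by
      intro i
      refine MeasureTheory.addHaar_image_eq_zero_of_det_fderivWithin_eq_zero
        MeasureTheory.volume (f' := fun y => hessCLM d (f ∘ τ i) y) ?_ ?_
      · intro y hy
        exact (gradMap_hasFDerivAt ((hbundle i y hy.1).2.2.2)).hasFDerivWithinAt
      · intro y hy
        rw [(clm_det_surj _ _ (hessCLM_apply d (f ∘ τ i) y)).1]
        exact hy.2
    have hsub : criticalValues n d U H ⊆ ⋃ i ∈ T, E i := by
      rintro w ⟨x, ⟨hxU, hne⟩, rfl⟩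
      have hxT : x ∈ ⋃ i ∈ T, B i := by
        rw [hTeq]
        exact Set.mem_iUnion.2 ⟨⟨x, hxU⟩, hxB ⟨x, hxU⟩⟩
      obtain ⟨i, hiT, hxBi⟩ := Set.mem_iUnion₂.1 hxT
      have hxUB : x ∈ U ∩ B i := ⟨hxU, hxBi⟩
      have hyO : coordProj (Fin.castLE hd) x ∈ coordProj (Fin.castLE hd) '' B i :=
        ⟨x, hxBi, rfl⟩
      have hτy : τ i (coordProj (Fin.castLE hd) x) = x := (hval i x hxUB).1
      have hdet : (hessMat d (f ∘ τ i) (coordProj (Fin.castLE hd) x)).det = 0 := by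
        by_contra h0
        apply hne
        have hsurj := (clm_det_surj _ _
          (hessCLM_apply d (f ∘ τ i) (coordProj (Fin.castLE hd) x))).2.2 h0
        have heq := diffImage_eq hd (hBopen i) (hOopen i) (hbundle i)
          (fun x' hx' => (hval i x' hx').2) hyO
        rw [hτy] at heq
        rw [heq]
        exact LinearMap.range_eq_top.2 hsurj
      refine Set.mem_biUnion hiT ⟨coordProj (Fin.castLE hd) x, ⟨hyO, hdet⟩, ?_⟩
      funext j
      exact ((hval i x hxUB).2 j).symm
    have hcrit0 : MeasureTheory.volume (criticalValues n d U H) = 0 :=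
      MeasureTheory.measure_mono_null hsub
        ((MeasureTheory.measure_biUnion_null_iff hTc).2 fun i _ => hE0 i)
    have hboxopen : IsOpen {a : Fin d → ℝ | ∀ i, |a i| < ε} := by
      have heq : {a : Fin d → ℝ | ∀ i, |a i| < ε} =
          ⋂ i, (fun a : Fin d → ℝ => a i) ⁻¹' Set.Ioo (-ε) ε := by
        ext a; simp [abs_lt]
      rw [heq]
      exact isOpen_iInter_of_finite fun i => isOpen_Ioo.preimage (continuous_apply i)
    have hpos : 0 < MeasureTheory.volume {a : Fin d → ℝ | ∀ i, |a i| < ε} :=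
      hboxopen.measure_pos _ ⟨0, fun i => by simpa using hε⟩
    have hzero : MeasureTheory.volume {a : Fin d → ℝ | ∀ i, |a i| < ε} = 0 :=
      MeasureTheory.measure_mono_null (fun a haa => hcon a haa) hcrit0
    rw [hzero] at hpos
    exact lt_irrefl _ hpos

end DMorse
end

section
/- (Fine definable open covering) Let 0 ≤ r < ∞ and let M be a definable C^r submanifold of ℝ^m (definable in a d-minimal expansion of the real ordered field). Let {U_i}_{i=1}^q be a finite cover of M by definable subsets open in M. Then there exist definable subsets V_1,…,V_q of M, each open in M, such that the closure cl_M(V_i) of V_i in M is contained in U_i for each 1 ≤ i ≤ q, and {V_i}_{i=1}^q is again a cover of M. -/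
open FirstOrder Filter Topology

namespace DMorse

section ShrinkAux

variable {L : FirstOrder.Language} [L.Structure ℝ]

lemma defSub {n n' : ℕ} (f : Fin n → Fin n') {S : Set (Fin n → ℝ)} (h : Def L n S) :
    Def L n' {v | (fun i => v (f i)) ∈ S} :=
  h.preimage_comp f

lemma defExistsTail {n j : ℕ} {S : Set (Fin (n + j) → ℝ)} (h : Def L (n + j) S) :
    Def L n {x | ∃ y : Fin j → ℝ, Fin.append x y ∈ S} := by
  have h2 := Set.Definable.image_comp h (Fin.castAdd j)
  have he : ((fun g : Fin (n + j) → ℝ => g ∘ Fin.castAdd j) '' S)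
      = {x | ∃ y : Fin j → ℝ, Fin.append x y ∈ S} := by
    ext x
    constructor
    · rintro ⟨g, hg, rfl⟩
      refine ⟨g ∘ Fin.natAdd n, ?_⟩
      have hg2 : Fin.append (g ∘ Fin.castAdd j) (g ∘ Fin.natAdd n) = g := by
        funext i
        induction i using Fin.addCases with
        | left i => simp [Fin.append_left]
        | right i => simp [Fin.append_right]
      rw [hg2]; exact hg
    · rintro ⟨y, hy⟩
      exact ⟨Fin.append x y, hy, by funext i; simp [Fin.append_left]⟩
  rw [← he]; exact h2

lemma defAddEq (hf : ExpandsRealOrderedField L) {n : ℕ} (p q s : Fin n) :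
    Def L n {v | v p + v q = v s} := by
  have h := defSub (L := L) ![p, q, s] hf.1
  have he : {v : Fin n → ℝ | (fun i => v (![p, q, s] i)) ∈ {v : Fin 3 → ℝ | v 0 + v 1 = v 2}}
      = {v | v p + v q = v s} := by
    ext v; simp [Set.mem_setOf_eq]
  rw [← he]; exact h

lemma defLt (hf : ExpandsRealOrderedField L) {n : ℕ} (p q : Fin n) :
    Def L n {v | v p < v q} := by
  have h := defSub (L := L) ![p, q] hf.2.2
  have he : {v : Fin n → ℝ | (fun i => v (![p, q] i)) ∈ {v : Fin 2 → ℝ | v 0 < v 1}}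
      = {v | v p < v q} := by
    ext v; simp [Set.mem_setOf_eq]
  rw [← he]; exact h

lemma defLtAdd (hf : ExpandsRealOrderedField L) {n : ℕ} (p q s : Fin n) :
    Def L n {v | v p < v q + v s} := by
  have h1 : Def L (n + 1) {w | w (Fin.castAdd 1 q) + w (Fin.castAdd 1 s) = w (Fin.natAdd n 0)} :=
    defAddEq hf _ _ _
  have h2 : Def L (n + 1) {w | w (Fin.castAdd 1 p) < w (Fin.natAdd n 0)} := defLt hf _ _
  have h3 := defExistsTail (n := n) (j := 1) (h1.inter h2)
  have he : {x : Fin n → ℝ | ∃ y : Fin 1 → ℝ, Fin.append x y ∈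
      ({w | w (Fin.castAdd 1 q) + w (Fin.castAdd 1 s) = w (Fin.natAdd n 0)} ∩
        {w | w (Fin.castAdd 1 p) < w (Fin.natAdd n 0)})} = {v | v p < v q + v s} := by
    ext x
    simp only [Set.mem_setOf_eq, Set.mem_inter_iff, Fin.append_left, Fin.append_right]
    constructor
    · rintro ⟨y, h1, h2⟩; exact h1 ▸ h2
    · intro h; exact ⟨fun _ => x q + x s, rfl, h⟩
  rw [← he]; exact h3

lemma defIInterFin {n : ℕ} {ι : Type*} [Fintype ι] {f : ι → Set (Fin n → ℝ)}
    (h : ∀ i, Def L n (f i)) : Def L n (⋂ i, f i) := by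
  have := Set.definable_biInter_finset (L := L) (A := (Set.univ : Set ℝ)) h Finset.univ
  simpa [Def] using this

/-- The first-order description of `{x | infDist x B < 2 * infDist x A}` (sup metric, `m ≥ 1`,
`A`, `B` nonempty). -/
def predSet (m : ℕ) (A B : Set (Fin m → ℝ)) : Set (Fin m → ℝ) :=
  {x | ∃ (b : Fin m → ℝ) (r : ℝ), b ∈ B ∧
      (∀ i, x i < b i + (r + r) ∧ b i < x i + (r + r)) ∧
      ∀ a ∈ A, ∃ i, ¬(x i < a i + r ∧ a i < x i + r)}

/-- Auxiliary set at level `m + (m+2) + m`: variables `(x, b, r, c, a)`. -/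
def auxE (m : ℕ) (A : Set (Fin m → ℝ)) : Set (Fin (m + (m + 2) + m) → ℝ) :=
  {w | (fun i => w (Fin.natAdd (m + (m + 2)) i)) ∈ A} ∩
    ⋂ i : Fin m,
      ({w | w (Fin.castAdd m (Fin.castAdd (m + 2) i)) <
          w (Fin.natAdd (m + (m + 2)) i) +
            w (Fin.castAdd m (Fin.natAdd m (Fin.natAdd m 0)))} ∩
       {w | w (Fin.natAdd (m + (m + 2)) i) <
          w (Fin.castAdd m (Fin.castAdd (m + 2) i)) +
            w (Fin.castAdd m (Fin.natAdd m (Fin.natAdd m 0)))})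

/-- Auxiliary set at level `m + (m+2)`: variables `(x, b, r, c)`. -/
def auxT (m : ℕ) (A B : Set (Fin m → ℝ)) : Set (Fin (m + (m + 2)) → ℝ) :=
  ({v | v (Fin.natAdd m (Fin.natAdd m 0)) + v (Fin.natAdd m (Fin.natAdd m 0)) =
      v (Fin.natAdd m (Fin.natAdd m 1))} ∩
    {v | (fun i => v (Fin.natAdd m (Fin.castAdd 2 i))) ∈ B}) ∩
  ((⋂ i : Fin m,
      ({v | v (Fin.castAdd (m + 2) i) <
          v (Fin.natAdd m (Fin.castAdd 2 i)) + v (Fin.natAdd m (Fin.natAdd m 1))} ∩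
       {v | v (Fin.natAdd m (Fin.castAdd 2 i)) <
          v (Fin.castAdd (m + 2) i) + v (Fin.natAdd m (Fin.natAdd m 1))})) ∩
    {v | ∃ y : Fin m → ℝ, Fin.append v y ∈ auxE m A}ᶜ)

lemma defPredSet (hf : ExpandsRealOrderedField L) {m : ℕ} {A B : Set (Fin m → ℝ)}
    (hA : Def L m A) (hB : Def L m B) : Def L m (predSet m A B) := by
  have hE : Def L (m + (m + 2) + m) (auxE m A) :=
    (defSub _ hA).inter (defIInterFin fun i => (defLtAdd hf _ _ _).inter (defLtAdd hf _ _ _))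
  have hF : Def L (m + (m + 2)) {v | ∃ y : Fin m → ℝ, Fin.append v y ∈ auxE m A} :=
    defExistsTail hE
  have hT : Def L (m + (m + 2)) (auxT m A B) :=
    ((defAddEq hf _ _ _).inter (defSub _ hB)).inter
      ((defIInterFin fun i => (defLtAdd hf _ _ _).inter (defLtAdd hf _ _ _)).inter hF.compl)
  have hRes := defExistsTail (n := m) (j := m + 2) hT
  have he : {x : Fin m → ℝ | ∃ y : Fin (m + 2) → ℝ, Fin.append x y ∈ auxT m A B}
      = predSet m A B := by
    ext x
    simp only [auxT, auxE, predSet, Set.mem_setOf_eq, Set.mem_inter_iff, Set.mem_iInter,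
      Set.mem_compl_iff, Fin.append_left, Fin.append_right]
    constructor
    · rintro ⟨y, ⟨hc, hB'⟩, hbox, hA'⟩
      refine ⟨fun i => y (Fin.castAdd 2 i), y (Fin.natAdd m 0), hB', ?_, ?_⟩
      · intro i
        have hb := hbox i
        rw [← hc] at hb
        exact hb
      · intro a ha
        by_contra hcon
        rw [not_exists] at hcon
        exact hA' ⟨a, ha, fun i => not_not.1 (hcon i)⟩
    · rintro ⟨b, r, hbB, hbox, hA'⟩
      refine ⟨Fin.append b ![r, r + r], ⟨?_, ?_⟩, ?_, ?_⟩
      · simp [Fin.append_right]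
      · have : (fun i => Fin.append b ![r, r + r] (Fin.castAdd 2 i)) = b := by
          funext i; simp [Fin.append_left]
        rw [this]; exact hbB
      · intro i
        simpa [Fin.append_left, Fin.append_right] using hbox i
      · rintro ⟨a, ha, hall⟩
        obtain ⟨i, hi⟩ := hA' a ha
        refine hi ?_
        simpa [Fin.append_left, Fin.append_right] using hall i
  rw [← he]; exact hRes

lemma predSet_eq_metric {m : ℕ} (hm : 0 < m) {A B : Set (Fin m → ℝ)}
    (hA : A.Nonempty) (hB : B.Nonempty) :
    predSet m A B = {x | Metric.infDist x B < 2 * Metric.infDist x A} := by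
  ext x
  simp only [predSet, Set.mem_setOf_eq]
  constructor
  · rintro ⟨b, r, hbB, hbox, hAr⟩
    have hr : 0 < r + r := by
      obtain ⟨h1, h2⟩ := hbox ⟨0, hm⟩
      linarith
    have hdb : dist x b < r + r := by
      rw [dist_pi_lt_iff hr]
      intro i
      rw [Real.dist_eq, abs_sub_lt_iff]
      obtain ⟨h1, h2⟩ := hbox i
      constructor <;> linarith
    have h1 : Metric.infDist x B ≤ dist x b := Metric.infDist_le_dist_of_mem hbB
    have h2 : r ≤ Metric.infDist x A := by
      refine le_of_not_gt fun hlt => ?_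
      obtain ⟨a, ha, hda⟩ := (Metric.infDist_lt_iff hA).1 hlt
      obtain ⟨i, hi⟩ := hAr a ha
      have hle : dist (x i) (a i) ≤ dist x a := dist_le_pi_dist x a i
      rw [Real.dist_eq] at hle
      refine hi ?_
      constructor <;> [skip; skip] <;>
        · cases abs_sub_lt_iff.1 (lt_of_le_of_lt hle hda) with
          | intro hl hr' => linarith
    linarith
  · intro h
    have h2r : Metric.infDist x B < Metric.infDist x A + Metric.infDist x A := by linarith
    obtain ⟨b, hbB, hdb⟩ := (Metric.infDist_lt_iff hB).1 h2r
    refine ⟨b, Metric.infDist x A, hbB, fun i => ?_, fun a ha => ?_⟩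
    · have := (dist_le_pi_dist x b i).trans_lt hdb
      rw [Real.dist_eq, abs_sub_lt_iff] at this
      exact ⟨by linarith [this.1], by linarith [this.2]⟩
    · by_cases hrpos : 0 < Metric.infDist x A
      · by_contra hcon
        rw [not_exists] at hcon
        have hda : dist x a < Metric.infDist x A := by
          rw [dist_pi_lt_iff hrpos]
          intro i
          have hci := not_not.1 (hcon i)
          rw [Real.dist_eq, abs_sub_lt_iff]
          exact ⟨by linarith [hci.1], by linarith [hci.2]⟩
        exact absurd (Metric.infDist_le_dist_of_mem ha) (not_le.2 hda)
      · push_neg at hrpos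
        exact ⟨⟨0, hm⟩, fun hcon => by
          obtain ⟨h1, h2⟩ := hcon
          linarith⟩

end ShrinkAux

theorem statement10 (L : FirstOrder.Language) [L.Structure ℝ]
    (hfield : ExpandsRealOrderedField L) (hdmin : DMinimal L)
    (r m k q : ℕ) (M : Set (Fin m → ℝ)) (hM : IsDefCrSubmanifold L r m k M)
    (U : Fin q → Set (Fin m → ℝ))
    (hUdef : ∀ i, Def L m (U i)) (hUsub : ∀ i, U i ⊆ M)
    (hUopen : ∀ i, ∃ O : Set (Fin m → ℝ), IsOpen O ∧ U i = M ∩ O)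
    (hUcover : M ⊆ ⋃ i, U i) :
    ∃ V : Fin q → Set (Fin m → ℝ),
      (∀ i, Def L m (V i)) ∧ (∀ i, V i ⊆ M) ∧
      (∀ i, ∃ O : Set (Fin m → ℝ), IsOpen O ∧ V i = M ∩ O) ∧
      (∀ i, M ∩ closure (V i) ⊆ U i) ∧ M ⊆ ⋃ i, V i := by
  classical
  by_cases hm0 : m = 0
  · -- dimension 0: the ambient space is a single point, take `V = U`.
    subst hm0
    refine ⟨U, hUdef, hUsub, hUopen, fun i x hx => ?_, hUcover⟩
    have hne : (U i).Nonempty := by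
      by_contra hemp
      rw [Set.not_nonempty_iff_eq_empty] at hemp
      rw [hemp, closure_empty] at hx
      exact hx.2
    obtain ⟨y, hy⟩ := hne
    have hxy : x = y := funext fun j => j.elim0
    rw [hxy]; exact hy
  · have hm : 0 < m := Nat.pos_of_ne_zero hm0
    by_cases hMU : ∃ i₀, M ⊆ U i₀
    · obtain ⟨i₀, hi₀⟩ := hMU
      refine ⟨fun j => if j = i₀ then M else ∅, ?_, ?_, ?_, ?_, ?_⟩
      · intro j
        by_cases hj : j = i₀ <;> simp only [hj, if_true, if_false, hj]
        · exact hM.1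
        · exact Set.definable_empty
      · intro j
        by_cases hj : j = i₀ <;> simp [hj, Set.empty_subset]
      · intro j
        by_cases hj : j = i₀
        · exact ⟨Set.univ, isOpen_univ, by simp [hj]⟩
        · exact ⟨∅, isOpen_empty, by simp [hj]⟩
      · intro j x hx
        by_cases hj : j = i₀
        · subst hj; exact hi₀ hx.1
        · simp only [hj, if_false, closure_empty] at hx
          exact absurd hx.2 (Set.notMem_empty x)
      · intro x hx
        exact Set.mem_iUnion.2 ⟨i₀, by simp [hx]⟩
    · push_neg at hMU
      have hAne : ∀ i, (M \ U i).Nonempty := by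
        intro i
        obtain ⟨x, hxM, hxU⟩ := Set.not_subset.1 (hMU i)
        exact ⟨x, hxM, hxU⟩
      set g : Fin q → (Fin m → ℝ) → ℝ := fun i x => Metric.infDist x (M \ U i) with hg
      have hAdef : ∀ i, Def L m (M \ U i) := fun i => hM.1.sdiff (hUdef i)
      -- positivity of g j at points of U j
      have key : ∀ (x : Fin m → ℝ) (j : Fin q), x ∈ U j → 0 < g j x := by
        intro x j hxUj
        obtain ⟨O, hOopen, hOUj⟩ := hUopen j
        have hxO : x ∈ O := (hOUj ▸ hxUj).2
        have hsubc : M \ U j ⊆ Oᶜ := by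
          intro a ⟨haM, haU⟩ hao
          exact haU (hOUj ▸ ⟨haM, hao⟩)
        have hOcne : (Oᶜ : Set (Fin m → ℝ)).Nonempty :=
          (hAne j).mono hsubc
        have h1 : 0 < Metric.infDist x Oᶜ :=
          (hOopen.isClosed_compl.notMem_iff_infDist_pos hOcne).1 (by simp [hxO])
        have h2 : Metric.infDist x Oᶜ ≤ g j x :=
          Metric.infDist_le_infDist_of_subset hsubc (hAne j)
        linarith
      refine ⟨fun i => M ∩ ⋂ j, {x | g j x < 2 * g i x}, ?_, ?_, ?_, ?_, ?_⟩
      · intro i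
        have heq : (M ∩ ⋂ j, {x | g j x < 2 * g i x})
            = M ∩ ⋂ j, predSet m (M \ U i) (M \ U j) := by
          congr 1
          refine Set.iInter_congr fun j => ?_
          rw [predSet_eq_metric hm (hAne i) (hAne j)]
        show Def L m (M ∩ ⋂ j, {x | g j x < 2 * g i x})
        rw [heq]
        exact hM.1.inter (defIInterFin fun j => defPredSet hfield (hAdef i) (hAdef j))
      · intro i
        exact Set.inter_subset_left
      · intro i
        refine ⟨⋂ j, {x | g j x < 2 * g i x}, ?_, rfl⟩
        exact isOpen_iInter_of_finite fun j =>
          isOpen_lt (Metric.continuous_infDist_pt _)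
            (continuous_const.mul (Metric.continuous_infDist_pt _))
      · intro i x hx
        obtain ⟨hxM, hxcl⟩ := hx
        have hle : ∀ j, g j x ≤ 2 * g i x := by
          intro j
          have hclosed : IsClosed {x | g j x ≤ 2 * g i x} :=
            isClosed_le (Metric.continuous_infDist_pt _)
              (continuous_const.mul (Metric.continuous_infDist_pt _))
          have hsub : (M ∩ ⋂ j', {x | g j' x < 2 * g i x}) ⊆ {x | g j x ≤ 2 * g i x} :=
            fun y hy => by
              simp only [Set.mem_setOf_eq]
              exact le_of_lt (Set.mem_iInter.1 hy.2 j)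
          exact closure_minimal hsub hclosed hxcl
        obtain ⟨j, hxUj⟩ := Set.mem_iUnion.1 (hUcover hxM)
        have hgj : 0 < g j x := key x j hxUj
        have hgi : 0 < g i x := by have := hle j; linarith
        have hxA : x ∉ M \ U i := by
          intro hmem
          rw [hg] at hgi
          simp only [Metric.infDist_zero_of_mem hmem] at hgi
          exact lt_irrefl 0 hgi
        by_contra hxUi
        exact hxA ⟨hxM, hxUi⟩
      · intro x hxM
        obtain ⟨j₀, hxUj₀⟩ := Set.mem_iUnion.1 (hUcover hxM)
        obtain ⟨i, _, hmax⟩ := Finset.exists_max_image Finset.univ (fun j => g j x)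
          ⟨j₀, Finset.mem_univ j₀⟩
        have hgi : 0 < g i x := lt_of_lt_of_le (key x j₀ hxUj₀) (hmax j₀ (Finset.mem_univ j₀))
        refine Set.mem_iUnion.2 ⟨i, hxM, Set.mem_iInter.2 fun j => ?_⟩
        have := hmax j (Finset.mem_univ j)
        simp only [Set.mem_setOf_eq]
        linarith


end DMorse
end
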